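/- arXiv:1210.2621 — 6 statements merged into one kernel-verified Lean document; each statement's English description precedes it below -/
import Mathlib

section
/- For all integers k, ℓ with 5 ≤ k ≤ ℓ and every integer n ≥ ℓ(k−1), there exists a (k,ℓ)-crucial permutation of length n. -/
/-- `π` (viewed as a 1-indexed function `ℕ → ℕ`) is a permutation of length `n`,
i.e. the values `π 1, π 2, …, π n` contain each of `1,…,n` exactly once. -/
def IsPermutation (n : ℕ) (π : ℕ → ℕ) : Prop :=
  (∀ i, 1 ≤ i → i ≤ n → 1 ≤ π i ∧ π i ≤ n) ∧
  (∀ i j, 1 ≤ i → i ≤ n → 1 ≤ j → j ≤ n → π i = π j → i = j) ∧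
  (∀ v, 1 ≤ v → v ≤ n → ∃ i, 1 ≤ i ∧ i ≤ n ∧ π i = v)

/-- `π` (of length `n`) has a strictly increasing arithmetic subsequence of length `k`,
i.e. an arithmetic occurrence of the pattern `1 2 … k`. -/
def HasArithInc (n k : ℕ) (π : ℕ → ℕ) : Prop :=
  ∃ i d : ℕ, 1 ≤ i ∧ 1 ≤ d ∧ i + (k - 1) * d ≤ n ∧
    ∀ j, j + 1 < k → π (i + j * d) < π (i + (j + 1) * d)

/-- `π` (of length `n`) has a strictly decreasing arithmetic subsequence of length `k`,
i.e. an arithmetic occurrence of the pattern `k (k-1) … 1`. -/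
def HasArithDec (n k : ℕ) (π : ℕ → ℕ) : Prop :=
  ∃ i d : ℕ, 1 ≤ i ∧ 1 ≤ d ∧ i + (k - 1) * d ≤ n ∧
    ∀ j, j + 1 < k → π (i + j * d) > π (i + (j + 1) * d)

/-- `π` (of length `n`) is `(k,l)`-anti-monotone: it avoids arithmetically
the patterns `1 2 … k` and `l (l-1) … 1`. -/
def AntiMonotone (n k l : ℕ) (π : ℕ → ℕ) : Prop :=
  ¬ HasArithInc n k π ∧ ¬ HasArithDec n l π

/-- The extension of `π` (of length `n`) to the right by `x`: every entry `≥ x` is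
increased by `1` and `x` is appended at the right end (position `n+1`). -/
def ExtendRight (n : ℕ) (π : ℕ → ℕ) (x : ℕ) : ℕ → ℕ :=
  fun i => if i = n + 1 then x else if x ≤ π i then π i + 1 else π i

/-- The extension of `π` to the left by `x`: every entry `≥ x` is increased by `1`
and `x` is prepended at the left end (position `1`). -/
def ExtendLeft (π : ℕ → ℕ) (x : ℕ) : ℕ → ℕ :=
  fun i => if i = 1 then x else if x ≤ π (i - 1) then π (i - 1) + 1 else π (i - 1)

/-- `π` is a `(k,l)`-crucial permutation of length `n`. -/
def Crucial (n k l : ℕ) (π : ℕ → ℕ) : Prop :=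
  IsPermutation n π ∧ AntiMonotone n k l π ∧
  ∀ x, 1 ≤ x → x ≤ n + 1 → ¬ AntiMonotone (n + 1) k l (ExtendRight n π x)

/-- `π` is a `(k,l)`-bicrucial permutation of length `n`. -/
def Bicrucial (n k l : ℕ) (π : ℕ → ℕ) : Prop :=
  Crucial n k l π ∧
  ∀ x, 1 ≤ x → x ≤ n + 1 → ¬ AntiMonotone (n + 1) k l (ExtendLeft π x)

namespace CrucialAux

/-- base-`M` digit-reversal embedding of `ℕ` into `[0,1) ⊆ ℚ`. -/
def phi (M : ℕ) (x : ℕ) : ℚ :=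
  if h : x = 0 ∨ M < 2 then 0
  else (↑(x % M)) / (M : ℚ) + phi M (x / M) / (M : ℚ)
termination_by x
decreasing_by
  exact Nat.div_lt_self (by omega) (by omega)

lemma phi_zero (M : ℕ) : phi M 0 = 0 := by
  rw [phi]; simp

lemma phi_eq {M x : ℕ} (hM : 2 ≤ M) (hx : x ≠ 0) :
    phi M x = (↑(x % M)) / (M : ℚ) + phi M (x / M) / (M : ℚ) := by
  conv_lhs => rw [phi]
  rw [dif_neg (by omega)]

lemma phi_nonneg (M x : ℕ) : 0 ≤ phi M x := by
  induction x using Nat.strong_induction_on with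
  | _ x ih =>
    rw [phi]
    split
    · exact le_refl 0
    · rename_i h
      have h2 : x / M < x := Nat.div_lt_self (by omega) (by omega)
      have := ih (x / M) h2
      positivity

lemma phi_lt_one {M : ℕ} (hM : 2 ≤ M) (x : ℕ) : phi M x < 1 := by
  induction x using Nat.strong_induction_on with
  | _ x ih =>
    by_cases hx : x = 0
    · subst hx; rw [phi_zero]; norm_num
    · rw [phi_eq hM hx]
      have h2 : x / M < x := Nat.div_lt_self (by omega) (by omega)
      have hrec := ih (x / M) h2
      have hmod : (x % M) < M := Nat.mod_lt _ (by omega)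
      have hmodq : ((x % M : ℕ) : ℚ) ≤ (M : ℚ) - 1 := by
        have : (x % M) + 1 ≤ M := hmod
        have := (Nat.cast_le (α := ℚ)).2 this
        push_cast at this ⊢
        linarith
      have hMq : (0 : ℚ) < (M : ℚ) := by positivity
      rw [← add_div, div_lt_one hMq]
      linarith

lemma phi_pos {M : ℕ} (hM : 2 ≤ M) {x : ℕ} (hx : x ≠ 0) : 0 < phi M x := by
  induction x using Nat.strong_induction_on with
  | _ x ih =>
    rw [phi_eq hM hx]
    have hMq : (0 : ℚ) < (M : ℚ) := by positivity
    by_cases hm : x % M = 0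
    · have hdvd : M ∣ x := Nat.dvd_of_mod_eq_zero hm
      have hge : M ≤ x := Nat.le_of_dvd (by omega) hdvd
      have hne : x / M ≠ 0 := by
        have : 1 ≤ x / M := (Nat.one_le_div_iff (by omega)).2 hge
        omega
      have h2 : x / M < x := Nat.div_lt_self (by omega) (by omega)
      have := ih (x / M) h2 hne
      rw [hm]
      push_cast
      positivity
    · have h1 : (0:ℚ) < (↑(x % M)) / (M:ℚ) := by
        have : 0 < x % M := Nat.pos_of_ne_zero hm
        positivity
      have h2 := phi_nonneg M (x / M)
      positivity

lemma phi_lt_digit_succ {M : ℕ} (hM : 2 ≤ M) (y : ℕ) :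
    phi M y < ((y % M : ℕ) + 1 : ℚ) / M := by
  have hMq : (0 : ℚ) < (M : ℚ) := by positivity
  by_cases hy : y = 0
  · subst hy; rw [phi_zero]; simp; positivity
  · rw [phi_eq hM hy]
    have := phi_lt_one hM (y / M)
    rw [← add_div]
    apply div_lt_div_of_pos_right ?_ hMq
    linarith

lemma phi_digit_le {M : ℕ} (hM : 2 ≤ M) (y : ℕ) :
    ((y % M : ℕ) : ℚ) / M ≤ phi M y := by
  by_cases hy : y = 0
  · subst hy; rw [phi_zero]; simp
  · rw [phi_eq hM hy]
    have h1 := phi_nonneg M (y / M)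
    have hMq : (0 : ℚ) < (M : ℚ) := by positivity
    have : 0 ≤ phi M (y / M) / (M:ℚ) := by positivity
    linarith


/-- digit `e` of `y` in base `M`. -/
def dig (M e y : ℕ) : ℕ := y / M ^ e % M

lemma phi_digit_lt {M : ℕ} (hM : 2 ≤ M) (e : ℕ) :
    ∀ y y', y % M ^ e = y' % M ^ e → dig M e y < dig M e y' → phi M y < phi M y' := by
  induction e with
  | zero =>
    intro y y' _ hd
    simp only [dig, pow_zero, Nat.div_one] at hd
    have hy' : y' ≠ 0 := by
      intro h; subst h; simp at hd
    have h1 := phi_lt_digit_succ hM y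
    have h2 := phi_digit_le hM y'
    have h3 : ((y % M : ℕ) + 1 : ℚ) / M ≤ ((y' % M : ℕ) : ℚ) / M := by
      have : ((y % M : ℕ) : ℚ) + 1 ≤ ((y' % M : ℕ) : ℚ) := by
        have : (y % M) + 1 ≤ y' % M := hd
        exact_mod_cast this
      have hMq : (0 : ℚ) < (M : ℚ) := by positivity
      gcongr
    linarith
  | succ e ih =>
    intro y y' hm hd
    have hy' : y' ≠ 0 := by
      intro h; subst h; simp [dig] at hd
    have hMdvd : (M : ℕ) ∣ M ^ (e + 1) := dvd_pow_self M (Nat.succ_ne_zero e)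
    have h0 : y % M = y' % M := by
      have h1 : y % M ^ (e+1) % M = y % M := Nat.mod_mod_of_dvd y hMdvd
      have h2 : y' % M ^ (e+1) % M = y' % M := Nat.mod_mod_of_dvd y' hMdvd
      rw [← h1, ← h2, hm]
    have hpow : M * M ^ e = M ^ (e + 1) := by rw [pow_succ]; ring
    have hdiv : (y / M) % M ^ e = (y' / M) % M ^ e := by
      rw [← Nat.mod_mul_right_div_self, ← Nat.mod_mul_right_div_self, hpow, hm]
    have hd' : dig M e (y / M) < dig M e (y' / M) := by
      simp only [dig] at hd ⊢
      rw [Nat.div_div_eq_div_mul, Nat.div_div_eq_div_mul, hpow]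
      exact hd
    have key := ih (y / M) (y' / M) hdiv hd'
    by_cases hy : y = 0
    · subst hy; rw [phi_zero]; exact phi_pos hM hy'
    · rw [phi_eq hM hy, phi_eq hM hy', h0]
      have hMq : (0 : ℚ) < (M : ℚ) := by positivity
      have : phi M (y / M) / (M:ℚ) < phi M (y' / M) / (M:ℚ) := by
        apply div_lt_div_of_pos_right key hMq
      linarith

lemma phi_digit_gt {M : ℕ} (hM : 2 ≤ M) (e : ℕ) {y y' : ℕ}
    (hm : y % M ^ e = y' % M ^ e) (hd : dig M e y' < dig M e y) : phi M y' < phi M y :=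
  phi_digit_lt hM e y' y hm.symm hd

lemma dig_lt {M : ℕ} (hM : 2 ≤ M) (e y : ℕ) : dig M e y < M :=
  Nat.mod_lt _ (by omega)

lemma add_base_mod {M e dt y : ℕ} : (y + M ^ e * dt) % M ^ e = y % M ^ e :=
  Nat.add_mul_mod_self_left y (M ^ e) dt

lemma add_base_dig {M e dt y : ℕ} (hM : 2 ≤ M) :
    dig M e (y + M ^ e * dt) = (dig M e y + dt % M) % M := by
  unfold dig
  rw [Nat.add_mul_div_left _ _ (pow_pos (by omega : 0 < M) e), Nat.add_mod]

/-- step lemma: if `phi` increases along one AP step, the `e`-digit climbs by exactly `dt % M`. -/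
lemma phi_step_inc {M : ℕ} (hM : 2 ≤ M) (e dt y : ℕ) (hdt : ¬ M ∣ dt)
    (hinc : phi M y < phi M (y + M ^ e * dt)) :
    dig M e (y + M ^ e * dt) = dig M e y + dt % M := by
  have hδ : dt % M ≠ 0 := fun h => hdt (Nat.dvd_of_mod_eq_zero h)
  have hδlt : dt % M < M := Nat.mod_lt _ (by omega)
  have hA : dig M e y < M := dig_lt hM e y
  have heq := add_base_dig (M := M) (e := e) (dt := dt) (y := y) hM
  by_cases hcase : dig M e y + dt % M < M
  · rw [heq, Nat.mod_eq_of_lt hcase]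
  · exfalso
    have h2 : dig M e (y + M ^ e * dt) = dig M e y + dt % M - M := by
      rw [heq]
      rw [Nat.mod_eq_sub_mod (by omega)]
      exact Nat.mod_eq_of_lt (by omega)
    have h3 : dig M e (y + M ^ e * dt) < dig M e y := by omega
    have := phi_digit_gt hM e (add_base_mod (M := M) (e := e) (dt := dt) (y := y)).symm h3
    exact absurd hinc (by linarith)

/-- step lemma: if `phi` decreases along one AP step, the `e`-digit wraps, dropping by `M - dt % M`. -/
lemma phi_step_dec {M : ℕ} (hM : 2 ≤ M) (e dt y : ℕ) (hdt : ¬ M ∣ dt)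
    (hdec : phi M (y + M ^ e * dt) < phi M y) :
    dig M e (y + M ^ e * dt) + (M - dt % M) = dig M e y := by
  have hδ : dt % M ≠ 0 := fun h => hdt (Nat.dvd_of_mod_eq_zero h)
  have hδlt : dt % M < M := Nat.mod_lt _ (by omega)
  have hA : dig M e y < M := dig_lt hM e y
  have heq := add_base_dig (M := M) (e := e) (dt := dt) (y := y) hM
  by_cases hcase : dig M e y + dt % M < M
  · exfalso
    have h2 : dig M e (y + M ^ e * dt) = dig M e y + dt % M := by
      rw [heq, Nat.mod_eq_of_lt hcase]
    have h3 : dig M e y < dig M e (y + M ^ e * dt) := by omega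
    have := phi_digit_lt hM e y _ (add_base_mod (M := M) (e := e) (dt := dt) (y := y)).symm h3
    exact absurd hdec (by linarith)
  · rw [heq, Nat.mod_eq_sub_mod (by omega), Nat.mod_eq_of_lt (by omega)]
    omega

/-- climbing along an increasing `phi`-AP: digit `e` grows linearly. -/
lemma phi_climb_inc {M : ℕ} (hM : 2 ≤ M) (e dt x : ℕ) (hdt : ¬ M ∣ dt) (L : ℕ)
    (h : ∀ t, t + 1 < L → phi M (x + t * (M ^ e * dt)) < phi M (x + (t + 1) * (M ^ e * dt))) :
    ∀ t, t < L → dig M e (x + t * (M ^ e * dt)) = dig M e x + t * (dt % M) := by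
  intro t
  induction t with
  | zero => intro _; simp
  | succ t iht =>
    intro ht
    have h1 := iht (by omega)
    have harr : x + (t + 1) * (M ^ e * dt) = (x + t * (M ^ e * dt)) + M ^ e * dt := by ring
    have h2 := phi_step_inc hM e dt (x + t * (M ^ e * dt)) hdt (by rw [← harr]; exact h t (by omega))
    rw [harr, h2, h1]
    ring

lemma phi_climb_dec {M : ℕ} (hM : 2 ≤ M) (e dt x : ℕ) (hdt : ¬ M ∣ dt) (L : ℕ)
    (h : ∀ t, t + 1 < L → phi M (x + (t + 1) * (M ^ e * dt)) < phi M (x + t * (M ^ e * dt))) :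
    ∀ t, t < L → dig M e (x + t * (M ^ e * dt)) + t * (M - dt % M) = dig M e x := by
  intro t
  induction t with
  | zero => intro _; simp
  | succ t iht =>
    intro ht
    have h1 := iht (by omega)
    have harr : x + (t + 1) * (M ^ e * dt) = (x + t * (M ^ e * dt)) + M ^ e * dt := by ring
    have h2 := phi_step_dec hM e dt (x + t * (M ^ e * dt)) hdt (by rw [← harr]; exact h t (by omega))
    rw [harr, Nat.succ_mul]
    omega

/-- length bound from climbing (increasing case), with digit information. -/
lemma phi_inc_len {M : ℕ} (hM : 2 ≤ M) (e dt x L : ℕ) (hdt : ¬ M ∣ dt) (hL : 1 ≤ L)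
    (h : ∀ t, t + 1 < L → phi M (x + t * (M ^ e * dt)) < phi M (x + (t + 1) * (M ^ e * dt))) :
    dig M e x + (L - 1) * (dt % M) ≤ M - 1 := by
  have := phi_climb_inc hM e dt x hdt L h (L - 1) (by omega)
  have hlt := dig_lt hM e (x + (L - 1) * (M ^ e * dt))
  omega

lemma phi_dec_len {M : ℕ} (hM : 2 ≤ M) (e dt x L : ℕ) (hdt : ¬ M ∣ dt) (hL : 1 ≤ L)
    (h : ∀ t, t + 1 < L → phi M (x + (t + 1) * (M ^ e * dt)) < phi M (x + t * (M ^ e * dt))) :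
    (L - 1) * (M - dt % M) ≤ M - 1 := by
  have := phi_climb_dec hM e dt x hdt L h (L - 1) (by omega)
  have hlt := dig_lt hM e x
  omega

lemma exists_factor {M : ℕ} (hM : 2 ≤ M) : ∀ d : ℕ, d ≠ 0 → ∃ e dt, d = M ^ e * dt ∧ ¬ M ∣ dt := by
  intro d
  induction d using Nat.strong_induction_on with
  | _ d ih =>
    intro hd
    by_cases hdvd : M ∣ d
    · obtain ⟨c, hc⟩ := hdvd
      have hc0 : c ≠ 0 := by rintro rfl; omega
      have hclt : c < d := by
        subst hc
        have : 1 * c < M * c := Nat.mul_lt_mul_of_lt_of_le (by omega) (le_refl c) (Nat.pos_of_ne_zero hc0)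
        omega
      obtain ⟨e, dt, h1, h2⟩ := ih c hclt hc0
      exact ⟨e + 1, dt, by rw [hc, h1, pow_succ]; ring, h2⟩
    · exact ⟨0, d, by simp, hdvd⟩

/-- an increasing `phi`-AP has length at most `M`. -/
lemma phi_inc_AP_le {M : ℕ} (hM : 2 ≤ M) (x d L : ℕ) (hd : d ≠ 0)
    (h : ∀ t, t + 1 < L → phi M (x + t * d) < phi M (x + (t + 1) * d)) : L ≤ M := by
  rcases Nat.eq_zero_or_pos L with hL | hL
  · omega
  obtain ⟨e, dt, rfl, hdt⟩ := exists_factor hM d hd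
  have := phi_inc_len hM e dt x L hdt hL h
  have hδ : dt % M ≠ 0 := fun hh => hdt (Nat.dvd_of_mod_eq_zero hh)
  have h1 : (L - 1) * 1 ≤ (L - 1) * (dt % M) := Nat.mul_le_mul_left _ (by omega)
  omega

/-- a decreasing `phi`-AP has length at most `M`. -/
lemma phi_dec_AP_le {M : ℕ} (hM : 2 ≤ M) (x d L : ℕ) (hd : d ≠ 0)
    (h : ∀ t, t + 1 < L → phi M (x + (t + 1) * d) < phi M (x + t * d)) : L ≤ M := by
  rcases Nat.eq_zero_or_pos L with hL | hL
  · omega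
  obtain ⟨e, dt, rfl, hdt⟩ := exists_factor hM d hd
  have := phi_dec_len hM e dt x L hdt hL h
  have hδ : dt % M ≠ 0 := fun hh => hdt (Nat.dvd_of_mod_eq_zero hh)
  have hδlt : dt % M < M := Nat.mod_lt _ (by omega)
  have h1 : (L - 1) * 1 ≤ (L - 1) * (M - dt % M) := Nat.mul_le_mul_left _ (by omega)
  omega

lemma phi_single {M : ℕ} (hM : 2 ≤ M) {x : ℕ} (hx : x < M) : phi M x = (x : ℚ) / M := by
  by_cases h0 : x = 0
  · subst h0; rw [phi_zero]; simp
  · rw [phi_eq hM h0, Nat.mod_eq_of_lt hx, Nat.div_eq_of_lt hx, phi_zero]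
    simp

lemma phi_inj {M : ℕ} (hM : 2 ≤ M) : ∀ x y : ℕ, phi M x = phi M y → x = y := by
  intro x
  induction x using Nat.strong_induction_on with
  | _ x ih =>
    intro y hxy
    rcases Nat.lt_trichotomy (x % M) (y % M) with hc | hc | hc
    · exfalso
      have := phi_digit_lt hM 0 x y (by simp [pow_zero, Nat.mod_one]) (by simpa [dig] using hc)
      exact absurd hxy (by linarith)
    · by_cases hx0 : x = 0
      · subst hx0
        by_cases hy0 : y = 0
        · omega
        · exact absurd (phi_zero M ▸ hxy) (by have := phi_pos hM hy0; intro hh; linarith)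
      · by_cases hy0 : y = 0
        · exfalso
          rw [hy0, phi_zero] at hxy
          have := phi_pos hM hx0
          linarith
        · have hrec : phi M (x / M) = phi M (y / M) := by
            rw [phi_eq hM hx0, phi_eq hM hy0, hc] at hxy
            have hMq : (0:ℚ) < (M:ℚ) := by positivity
            have h2 : phi M (x / M) / (M:ℚ) = phi M (y / M) / (M:ℚ) := by linarith
            field_simp at h2
            exact h2
          have hdiv : x / M = y / M := ih (x / M) (Nat.div_lt_self (by omega) (by omega)) _ hrec
          rw [← Nat.div_add_mod x M, ← Nat.div_add_mod y M, hdiv, hc]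
    · exfalso
      have := phi_digit_lt hM 0 y x (by simp [pow_zero, Nat.mod_one]) (by simpa [dig] using hc)
      exact absurd hxy (by intro hh; linarith)

section G

variable (k ℓ : ℕ)

/-- the master infinite sequence (read right-to-left from the permutation) -/
def gseq (j : ℕ) : ℚ :=
  if j % ℓ = 0 then 1 - phi (k - 1) (j / ℓ - 1)
  else if j < ℓ then 1 + (j : ℚ) / ℓ
  else 2 + phi (k - 2) j

variable {k ℓ}
variable (hk : 5 ≤ k) (hkl : k ≤ ℓ)

section ClassLemmas
include hk hkl

lemma g_guard_eq {j : ℕ} (h : j % ℓ = 0) : gseq k ℓ j = 1 - phi (k - 1) (j / ℓ - 1) := by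
  rw [gseq, if_pos h]

lemma g_guard_le_one {j : ℕ} (h : j % ℓ = 0) : gseq k ℓ j ≤ 1 := by
  rw [g_guard_eq hk hkl h]
  have := phi_nonneg (k - 1) (j / ℓ - 1)
  linarith

lemma g_guard_pos {j : ℕ} (h : j % ℓ = 0) : 0 < gseq k ℓ j := by
  rw [g_guard_eq hk hkl h]
  have := phi_lt_one (M := k - 1) (by omega) (j / ℓ - 1)
  linarith

lemma g_run_eq {j : ℕ} (h1 : 1 ≤ j) (h2 : j < ℓ) : gseq k ℓ j = 1 + (j : ℚ) / ℓ := by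
  rw [gseq, if_neg (by rw [Nat.mod_eq_of_lt h2]; omega), if_pos h2]

lemma g_run_gt_one {j : ℕ} (h1 : 1 ≤ j) (h2 : j < ℓ) : 1 < gseq k ℓ j := by
  rw [g_run_eq hk hkl h1 h2]
  have h3 : (0:ℚ) < (j:ℚ) / ℓ := by
    have : (0:ℚ) < (j:ℚ) := by exact_mod_cast h1
    have : (0:ℚ) < (ℓ:ℚ) := by exact_mod_cast (by omega : 0 < ℓ)
    positivity
  linarith

lemma g_run_lt_two {j : ℕ} (h1 : 1 ≤ j) (h2 : j < ℓ) : gseq k ℓ j < 2 := by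
  rw [g_run_eq hk hkl h1 h2]
  have hl0 : (0:ℚ) < (ℓ:ℚ) := by exact_mod_cast (by omega : 0 < ℓ)
  have : (j:ℚ) / ℓ < 1 := by
    rw [div_lt_one hl0]
    exact_mod_cast h2
  linarith

lemma g_bulk_eq {j : ℕ} (h0 : j % ℓ ≠ 0) (h2 : ¬ j < ℓ) : gseq k ℓ j = 2 + phi (k - 2) j := by
  rw [gseq, if_neg h0, if_neg h2]

lemma g_bulk_ge_two {j : ℕ} (h0 : j % ℓ ≠ 0) (h2 : ¬ j < ℓ) : 2 ≤ gseq k ℓ j := by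
  rw [g_bulk_eq hk hkl h0 h2]
  have := phi_nonneg (k - 2) j
  linarith

end ClassLemmas

end G

section Main

variable {k ℓ : ℕ}

/-- `gseq` has no strictly decreasing `k`-term arithmetic subsequence. -/
theorem g_noDec (hk : 5 ≤ k) (hkl : k ≤ ℓ) (q d : ℕ) (hq : 1 ≤ q) (hd : 1 ≤ d)
    (h : ∀ s, s + 1 < k → gseq k ℓ (q + (s + 1) * d) < gseq k ℓ (q + s * d)) : False := by
  have hM1 : 2 ≤ k - 1 := by omega
  have hM2 : 2 ≤ k - 2 := by omega
  have hl5 : 5 ≤ ℓ := by omega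
  have hl0 : 0 < ℓ := by omega
  by_cases hld : ℓ ∣ d
  · obtain ⟨D, hD⟩ := hld
    have hD1 : 1 ≤ D := by
      rcases Nat.eq_zero_or_pos D with h0 | h0
      · subst h0; simp at hD; omega
      · exact h0
    by_cases hlq : ℓ ∣ q
    · -- pure guard: φ_{k-1} strictly increasing k-AP, contradiction
      obtain ⟨Q, hQ⟩ := hlq
      have hQ1 : 1 ≤ Q := by
        rcases Nat.eq_zero_or_pos Q with h0 | h0
        · subst h0; simp at hQ; omega
        · exact h0
      have key : ∀ s : ℕ, gseq k ℓ (q + s * d) = 1 - phi (k - 1) ((Q - 1) + s * D) := by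
        intro s
        have hmod : (q + s * d) % ℓ = 0 := by
          rw [hQ, hD]
          have : ℓ * Q + s * (ℓ * D) = ℓ * (Q + s * D) := by ring
          rw [this, Nat.mul_mod_right]
        rw [g_guard_eq hk hkl hmod]
        congr 2
        rw [hQ, hD]
        have h1 : ℓ * Q + s * (ℓ * D) = ℓ * (Q + s * D) := by ring
        rw [h1, Nat.mul_div_cancel_left _ hl0]
        omega
      have hphi : ∀ t, t + 1 < k →
          phi (k - 1) ((Q - 1) + t * D) < phi (k - 1) ((Q - 1) + (t + 1) * D) := by
        intro t ht
        have := h t ht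
        rw [key t, key (t + 1)] at this
        linarith
      have := phi_inc_AP_le hM1 (Q - 1) D k (by omega) hphi
      omega
    · -- positions s ≥ 1 are all in the bulk: decreasing φ_{k-2} AP of length k-1
      have hbulk : ∀ s : ℕ, 1 ≤ s → gseq k ℓ (q + s * d) = 2 + phi (k - 2) (q + s * d) := by
        intro s hs
        apply g_bulk_eq hk hkl
        · intro hmod
          apply hlq
          have h1 : ℓ ∣ s * d := by exact Dvd.dvd.mul_left ⟨D, hD⟩ s
          have h2 : ℓ ∣ q + s * d := Nat.dvd_of_mod_eq_zero hmod
          have := Nat.dvd_sub h2 h1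
          simpa using this
        · have : ℓ ≤ d := by rw [hD]; exact Nat.le_mul_of_pos_right _ hD1
          have : q + 1 * d ≤ q + s * d := by
            apply Nat.add_le_add_left
            exact Nat.mul_le_mul_right _ hs
          omega
      have hphi : ∀ t, t + 1 < k - 1 →
          phi (k - 2) ((q + d) + (t + 1) * d) < phi (k - 2) ((q + d) + t * d) := by
        intro t ht
        have := h (t + 1) (by omega)
        rw [hbulk (t + 1) (by omega), hbulk (t + 2) (by omega)] at this
        have e1 : q + (t + 1) * d = (q + d) + t * d := by ring
        have e2 : q + (t + 2) * d = (q + d) + (t + 1) * d := by ring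
        rw [e1, e2] at this
        linarith
      have := phi_dec_AP_le hM2 (q + d) d (k - 1) (by omega) hphi
      omega
  · -- ℓ ∤ d
    -- claim 1: no guard among positions s ∈ [1, k-2]
    have claim1 : ∀ s, 1 ≤ s → s ≤ k - 2 → ¬ (q + s * d) % ℓ = 0 := by
      intro s h1 h2 hguard
      have hnext := h s (by omega)
      have hgle : gseq k ℓ (q + s * d) ≤ 1 := g_guard_le_one hk hkl hguard
      have hmod1 : ¬ (q + (s + 1) * d) % ℓ = 0 := by
        intro hh
        apply hld
        have ha : ℓ ∣ q + (s + 1) * d := Nat.dvd_of_mod_eq_zero hh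
        have hb : ℓ ∣ q + s * d := Nat.dvd_of_mod_eq_zero hguard
        have hsub := Nat.dvd_sub ha hb
        have : (q + (s + 1) * d) - (q + s * d) = d := by
          have : s * d + d = (s + 1) * d := by ring
          omega
        rwa [this] at hsub
      have hgt : 1 < gseq k ℓ (q + (s + 1) * d) := by
        by_cases hrun : q + (s + 1) * d < ℓ
        · exact g_run_gt_one hk hkl (by omega) hrun
        · have := g_bulk_ge_two hk hkl hmod1 hrun
          linarith
      linarith
    -- claim 2: no run among positions s ∈ [1, k-2]
    have claim2 : ∀ s, 1 ≤ s → s ≤ k - 2 → ¬ (q + s * d) < ℓ := by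
      intro s h1 h2 hrun
      have hprev := h (s - 1) (by omega)
      have hs1 : s - 1 + 1 = s := by omega
      rw [hs1] at hprev
      -- p_{s-1} < p_s < ℓ, and g(p_{s-1}) > g(p_s) > 1
      have hplt : q + (s - 1) * d < q + s * d := by
        have : (s - 1) * d < s * d := by
          apply Nat.mul_lt_mul_of_lt_of_le (by omega) (le_refl d) (by omega)
        omega
      have hprun : q + (s - 1) * d < ℓ := by omega
      have hgs : 1 < gseq k ℓ (q + s * d) := g_run_gt_one hk hkl (by omega) hrun
      -- p_{s-1} is a run position or a guard position; both contradict
      by_cases hgmod : (q + (s - 1) * d) % ℓ = 0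
      · have := g_guard_le_one hk hkl hgmod
        linarith
      · -- both run: strictly increasing values
        have e1 : gseq k ℓ (q + (s - 1) * d) = 1 + ((q + (s-1)*d : ℕ) : ℚ) / ℓ :=
          g_run_eq hk hkl (by omega) hprun
        have e2 : gseq k ℓ (q + s * d) = 1 + ((q + s*d : ℕ) : ℚ) / ℓ :=
          g_run_eq hk hkl (by omega) hrun
        rw [e1, e2] at hprev
        have hlq0 : (0:ℚ) < (ℓ:ℚ) := by exact_mod_cast hl0
        have hcast : ((q + (s-1)*d : ℕ) : ℚ) < ((q + s*d : ℕ) : ℚ) := by exact_mod_cast hplt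
        have : ((q + (s-1)*d : ℕ) : ℚ) / ℓ < ((q + s*d : ℕ) : ℚ) / ℓ :=
          div_lt_div_of_pos_right hcast hlq0
        linarith
    -- so s ∈ [1, k-2] all bulk; also s = 0 is bulk
    have hbulk : ∀ s, s ≤ k - 2 → gseq k ℓ (q + s * d) = 2 + phi (k - 2) (q + s * d) := by
      intro s hs
      rcases Nat.eq_zero_or_pos s with h0 | h0
      · subst h0
        have h1bulk : gseq k ℓ (q + 1 * d) = 2 + phi (k-2) (q + 1 * d) :=
          g_bulk_eq hk hkl (claim1 1 (le_refl 1) (by omega)) (claim2 1 (le_refl 1) (by omega))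
        have hge2 : 2 ≤ gseq k ℓ (q + 1 * d) := by
          rw [h1bulk]; have := phi_nonneg (k-2) (q + 1*d); linarith
        have h0lt := h 0 (by omega)
        simp only [zero_mul, Nat.add_zero, zero_add] at h0lt hge2 ⊢
        have hq2 : 2 < gseq k ℓ q := by
          have := h 0 (by omega)
          simp only [zero_mul, Nat.add_zero, zero_add, one_mul] at this
          rw [show q + 1 * d = q + d by ring] at hge2
          linarith
        apply g_bulk_eq hk hkl
        · intro hguard
          have := g_guard_le_one hk hkl hguard
          linarith
        · intro hrun
          have := g_run_lt_two hk hkl (by omega) hrun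
          linarith
      · exact g_bulk_eq hk hkl (claim1 s h0 hs) (claim2 s h0 hs)
    -- φ_{k-2} decreasing AP of length k-1
    have hphi : ∀ t, t + 1 < k - 1 →
        phi (k - 2) (q + (t + 1) * d) < phi (k - 2) (q + t * d) := by
      intro t ht
      have := h t (by omega)
      rw [hbulk t (by omega), hbulk (t + 1) (by omega)] at this
      linarith
    have := phi_dec_AP_le hM2 q d (k - 1) (by omega) hphi
    omega


/-- `gseq` has no strictly increasing `ℓ`-term arithmetic subsequence. -/
theorem g_noInc (hk : 5 ≤ k) (hkl : k ≤ ℓ) (q d : ℕ) (hq : 1 ≤ q) (hd : 1 ≤ d)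
    (h : ∀ s, s + 1 < ℓ → gseq k ℓ (q + s * d) < gseq k ℓ (q + (s + 1) * d)) : False := by
  have hM1 : 2 ≤ k - 1 := by omega
  have hM2 : 2 ≤ k - 2 := by omega
  have hl5 : 5 ≤ ℓ := by omega
  have hl0 : 0 < ℓ := by omega
  by_cases hld : ℓ ∣ d
  · obtain ⟨D, hD⟩ := hld
    have hD1 : 1 ≤ D := by
      rcases Nat.eq_zero_or_pos D with h0 | h0
      · subst h0; simp at hD; omega
      · exact h0
    by_cases hlq : ℓ ∣ q
    · -- pure guard: φ_{k-1} strictly decreasing ℓ-AP, contradiction with ℓ ≥ k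
      obtain ⟨Q, hQ⟩ := hlq
      have hQ1 : 1 ≤ Q := by
        rcases Nat.eq_zero_or_pos Q with h0 | h0
        · subst h0; simp at hQ; omega
        · exact h0
      have key : ∀ s : ℕ, gseq k ℓ (q + s * d) = 1 - phi (k - 1) ((Q - 1) + s * D) := by
        intro s
        have hmod : (q + s * d) % ℓ = 0 := by
          rw [hQ, hD]
          have : ℓ * Q + s * (ℓ * D) = ℓ * (Q + s * D) := by ring
          rw [this, Nat.mul_mod_right]
        rw [g_guard_eq hk hkl hmod]
        congr 2
        rw [hQ, hD]
        have h1 : ℓ * Q + s * (ℓ * D) = ℓ * (Q + s * D) := by ring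
        rw [h1, Nat.mul_div_cancel_left _ hl0]
        omega
      have hphi : ∀ t, t + 1 < ℓ →
          phi (k - 1) ((Q - 1) + (t + 1) * D) < phi (k - 1) ((Q - 1) + t * D) := by
        intro t ht
        have := h t ht
        rw [key t, key (t + 1)] at this
        linarith
      have := phi_dec_AP_le hM1 (Q - 1) D ℓ (by omega) hphi
      omega
    · -- positions s ≥ 1 are all bulk: increasing φ_{k-2} AP of length ℓ-1 > k-2
      have hbulk : ∀ s : ℕ, 1 ≤ s → gseq k ℓ (q + s * d) = 2 + phi (k - 2) (q + s * d) := by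
        intro s hs
        apply g_bulk_eq hk hkl
        · intro hmod
          apply hlq
          have h1 : ℓ ∣ s * d := Dvd.dvd.mul_left ⟨D, hD⟩ s
          have h2 : ℓ ∣ q + s * d := Nat.dvd_of_mod_eq_zero hmod
          have := Nat.dvd_sub h2 h1
          simpa using this
        · have hld2 : ℓ ≤ d := by rw [hD]; exact Nat.le_mul_of_pos_right _ hD1
          have : q + 1 * d ≤ q + s * d := by
            apply Nat.add_le_add_left
            exact Nat.mul_le_mul_right _ hs
          omega
      have hphi : ∀ t, t + 1 < ℓ - 1 →
          phi (k - 2) ((q + d) + t * d) < phi (k - 2) ((q + d) + (t + 1) * d) := by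
        intro t ht
        have := h (t + 1) (by omega)
        rw [hbulk (t + 1) (by omega), hbulk (t + 2) (by omega)] at this
        have e1 : q + (t + 1) * d = (q + d) + t * d := by ring
        have e2 : q + (t + 2) * d = (q + d) + (t + 1) * d := by ring
        rw [e1, e2] at this
        linarith
      have := phi_inc_AP_le hM2 (q + d) d (ℓ - 1) (by omega) hphi
      omega
  · -- ℓ ∤ d : main case
    -- no guard positions among s ∈ [1, ℓ-1]
    have claim1 : ∀ s, 1 ≤ s → s ≤ ℓ - 1 → ¬ (q + s * d) % ℓ = 0 := by
      intro s h1 h2 hguard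
      have hprev := h (s - 1) (by omega)
      have hs1 : s - 1 + 1 = s := by omega
      rw [hs1] at hprev
      have hgle : gseq k ℓ (q + s * d) ≤ 1 := g_guard_le_one hk hkl hguard
      by_cases hgmod : (q + (s - 1) * d) % ℓ = 0
      · apply hld
        have ha : ℓ ∣ q + s * d := Nat.dvd_of_mod_eq_zero hguard
        have hb : ℓ ∣ q + (s - 1) * d := Nat.dvd_of_mod_eq_zero hgmod
        have hsub := Nat.dvd_sub ha hb
        have heq : (q + s * d) - (q + (s - 1) * d) = d := by
          have h3 : (s - 1) * d + d = s * d := by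
            have : s - 1 + 1 = s := by omega
            calc (s - 1) * d + d = (s - 1 + 1) * d := by ring
            _ = s * d := by rw [this]
          omega
        rwa [heq] at hsub
      · have hgt : 1 < gseq k ℓ (q + (s - 1) * d) := by
          by_cases hrun : q + (s - 1) * d < ℓ
          · exact g_run_gt_one hk hkl (by omega) hrun
          · have := g_bulk_ge_two hk hkl hgmod hrun
            linarith
        linarith
    -- q itself is not a guard position
    have claim0 : ¬ ℓ ∣ q := by
      intro hlq
      have hqge : ℓ ≤ q := Nat.le_of_dvd (by omega) hlq
      have hbulk : ∀ s : ℕ, 1 ≤ s → s ≤ ℓ - 1 →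
          gseq k ℓ (q + s * d) = 2 + phi (k - 2) (q + s * d) := by
        intro s hs1 hs2
        apply g_bulk_eq hk hkl
        · exact claim1 s hs1 hs2
        · have : q + 1 * 1 ≤ q + s * d := by
            apply Nat.add_le_add_left
            exact Nat.mul_le_mul hs1 hd
          omega
      have hphi : ∀ t, t + 1 < ℓ - 1 →
          phi (k - 2) ((q + d) + t * d) < phi (k - 2) ((q + d) + (t + 1) * d) := by
        intro t ht
        have := h (t + 1) (by omega)
        rw [hbulk (t + 1) (by omega) (by omega), hbulk (t + 2) (by omega) (by omega)] at this
        have e1 : q + (t + 1) * d = (q + d) + t * d := by ring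
        have e2 : q + (t + 2) * d = (q + d) + (t + 1) * d := by ring
        rw [e1, e2] at this
        linarith
      have := phi_inc_AP_le hM2 (q + d) d (ℓ - 1) (by omega) hphi
      omega
    have hqmod : q % ℓ ≠ 0 := fun hh => claim0 (Nat.dvd_of_mod_eq_zero hh)
    have hqmodlt : q % ℓ < ℓ := Nat.mod_lt _ hl0
    -- d ≥ 2
    have hd2 : 2 ≤ d := by
      rcases Nat.lt_or_ge d 2 with hcase | hcase
      · exfalso
        have hd1 : d = 1 := by omega
        have hs0 : (q + (ℓ - q % ℓ) * d) % ℓ = 0 := by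
          have h1 := Nat.div_add_mod q ℓ
          have h2 : ℓ * (q / ℓ + 1) = ℓ * (q / ℓ) + ℓ := by ring
          have hrep : q + (ℓ - q % ℓ) = ℓ * (q / ℓ + 1) := by omega
          rw [hd1, mul_one, hrep, Nat.mul_mod_right]
        exact claim1 (ℓ - q % ℓ) (by omega) (by omega) hs0
      · exact hcase
    -- the run/bulk transition point
    have hPex : ∃ s, ℓ ≤ q + s * d := ⟨ℓ, by have : ℓ * 1 ≤ ℓ * d := Nat.mul_le_mul_left _ hd; omega⟩
    set a := Nat.find hPex with ha_def
    have ha : ℓ ≤ q + a * d := Nat.find_spec hPex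
    have hmin : ∀ s, s < a → q + s * d < ℓ := by
      intro s hs
      have := Nat.find_min hPex hs
      omega
    have haub : a ≤ ℓ - 1 := by
      apply Nat.find_le
      have h2 : (ℓ - 1) * 2 ≤ (ℓ - 1) * d := Nat.mul_le_mul_left _ hd2
      omega
    -- bulk positions from a on
    have hbulkS : ∀ s, a ≤ s → s ≤ ℓ - 1 → gseq k ℓ (q + s * d) = 2 + phi (k - 2) (q + s * d) := by
      intro s hs1 hs2
      apply g_bulk_eq hk hkl
      · rcases Nat.eq_zero_or_pos s with h0 | h0
        · subst h0
          intro hh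
          exact claim0 (Nat.dvd_of_mod_eq_zero (by simpa using hh))
        · exact claim1 s h0 hs2
      · have : q + a * d ≤ q + s * d := by
          apply Nat.add_le_add_left
          exact Nat.mul_le_mul_right _ hs1
        omega
    rcases Nat.eq_zero_or_pos a with ha0 | ha0
    · -- all bulk: increasing φ AP of length ℓ
      have hphi : ∀ t, t + 1 < ℓ →
          phi (k - 2) (q + t * d) < phi (k - 2) (q + (t + 1) * d) := by
        intro t ht
        have := h t ht
        rw [hbulkS t (by omega) (by omega), hbulkS (t + 1) (by omega) (by omega)] at this
        linarith
      have := phi_inc_AP_le hM2 q d ℓ (by omega) hphi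
      omega
    · -- a ≥ 1 : run piece then bulk piece
      have hrunb : q + (a - 1) * d < ℓ := hmin (a - 1) (by omega)
      have hrund : (a - 1) * d ≤ ℓ - 2 := by omega
      -- the bulk φ-AP, length ℓ - a ≥ 1
      have hphiB : ∀ t, t + 1 < ℓ - a →
          phi (k - 2) ((q + a * d) + t * d) < phi (k - 2) ((q + a * d) + (t + 1) * d) := by
        intro t ht
        have := h (a + t) (by omega)
        rw [hbulkS (a + t) (by omega) (by omega), hbulkS (a + t + 1) (by omega) (by omega)] at this
        have e1 : q + (a + t) * d = (q + a * d) + t * d := by ring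
        have e2 : q + (a + t + 1) * d = (q + a * d) + (t + 1) * d := by ring
        rw [e1, e2] at this
        linarith
      have hble : ℓ - a ≤ k - 2 := phi_inc_AP_le hM2 (q + a * d) d (ℓ - a) (by omega) hphiB
      have halow : ℓ - k + 2 ≤ a := by omega
      rcases Nat.lt_or_ge d (k - 1) with hdlt | hdge
      · -- d ≤ k - 2
        rcases Nat.lt_or_ge d (k - 2) with hdlt2 | hdge2
        · -- d < k - 2 : e = 0 case
          have hdt : ¬ (k - 2) ∣ d := by
            intro hh
            have := Nat.le_of_dvd (by omega) hh
            omega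
          have hlen := phi_inc_len hM2 0 d (q + a * d) (ℓ - a) hdt (by omega)
            (by
              intro t ht
              have := hphiB t ht
              simpa [pow_zero, one_mul] using this)
          have hdmod : d % (k - 2) = d := Nat.mod_eq_of_lt hdlt2
          rw [hdmod] at hlen
          -- (ℓ - a - 1) * d ≤ k - 3 and (a-1) * d ≤ ℓ - 2 and a + (ℓ - a) = ℓ
          have hsum : (ℓ - 2) * d = (a - 1) * d + (ℓ - a - 1) * d := by
            rw [← Nat.add_mul]
            congr 1
            omega
          have h2d : (ℓ - 2) * 2 ≤ (ℓ - 2) * d := Nat.mul_le_mul_left _ hd2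
          omega
        · -- d = k - 2 : forced case ℓ = k, a = 2, q = 1
          have hdeq : d = k - 2 := by omega
          -- ℓ = k
          have hmul : (ℓ - k + 1) * (k - 2) ≤ (a - 1) * d :=
            Nat.mul_le_mul (by omega) (by omega)
          have hexp : (ℓ - k + 1) * (k - 2) = (ℓ - k) * (k - 2) + (k - 2) := by
            rw [Nat.succ_mul]
          have h3t : (ℓ - k) * 3 ≤ (ℓ - k) * (k - 2) := Nat.mul_le_mul_left _ (by omega)
          have hlk : ℓ = k := by omega
          have ha2 : a = 2 := by
            rcases Nat.lt_or_ge a 3 with hc | hc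
            · omega
            · exfalso
              have : 2 * d ≤ (a - 1) * d := Nat.mul_le_mul_right _ (by omega)
              omega
          have hq1 : q = 1 := by
            have := hmin 1 (by omega)
            rw [one_mul] at this
            omega
          -- climb with e = 1, dt = 1
          have hdt1 : ¬ (k - 2) ∣ 1 := by
            intro hh
            have := Nat.le_of_dvd one_pos hh
            omega
          have hdrw : (k - 2) ^ 1 * 1 = d := by rw [pow_one, mul_one, hdeq]
          have hlen := phi_inc_len hM2 1 1 (q + a * d) (ℓ - a) hdt1 (by omega)
            (by
              intro t ht
              have := hphiB t ht
              rw [hdrw]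
              exact this)
          -- compute dig (k-2) 1 (1 + 2*(k-2)) = 2
          have hx0 : q + a * d = 1 + 2 * (k - 2) := by rw [hq1, ha2, hdeq]
          have hdig : dig (k - 2) 1 (q + a * d) = 2 := by
            rw [hx0]
            unfold dig
            rw [pow_one]
            have h1 : (1 + 2 * (k - 2)) / (k - 2) = 2 := by
              rw [Nat.add_mul_div_right _ _ (by omega : 0 < k - 2)]
              rw [Nat.div_eq_of_lt (by omega)]
            rw [h1]
            exact Nat.mod_eq_of_lt (by omega)
          rw [hdig] at hlen
          have h1mod : 1 % (k - 2) = 1 := Nat.mod_eq_of_lt (by omega)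
          rw [h1mod, mul_one] at hlen
          omega
      · -- d ≥ k - 1 : impossible by span counting
        have hmul : (ℓ - k + 1) * (k - 1) ≤ (a - 1) * d :=
          Nat.mul_le_mul (by omega) hdge
        have hexp : (ℓ - k + 1) * (k - 1) = (ℓ - k) * (k - 1) + (k - 1) := by
          rw [Nat.succ_mul]
        have h4t : (ℓ - k) * 4 ≤ (ℓ - k) * (k - 1) := Nat.mul_le_mul_left _ (by omega)
        omega


section Perm

variable {k ℓ : ℕ}

lemma g_inj (hk : 5 ≤ k) (hkl : k ≤ ℓ) {i j : ℕ} (hi : 1 ≤ i) (hj : 1 ≤ j)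
    (hg : gseq k ℓ i = gseq k ℓ j) : i = j := by
  have hM1 : 2 ≤ k - 1 := by omega
  have hM2 : 2 ≤ k - 2 := by omega
  have hl0 : 0 < ℓ := by omega
  by_cases hgi : i % ℓ = 0
  · by_cases hgj : j % ℓ = 0
    · -- both guard
      rw [g_guard_eq hk hkl hgi, g_guard_eq hk hkl hgj] at hg
      have hphi : phi (k-1) (i / ℓ - 1) = phi (k-1) (j / ℓ - 1) := by linarith
      have := phi_inj hM1 _ _ hphi
      have hdi : 1 ≤ i / ℓ := (Nat.one_le_div_iff hl0).2 (Nat.le_of_dvd (by omega) (Nat.dvd_of_mod_eq_zero hgi))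
      have hdj : 1 ≤ j / ℓ := (Nat.one_le_div_iff hl0).2 (Nat.le_of_dvd (by omega) (Nat.dvd_of_mod_eq_zero hgj))
      have hdiv : i / ℓ = j / ℓ := by omega
      have h1 := Nat.div_add_mod i ℓ
      have h2 := Nat.div_add_mod j ℓ
      rw [hgi] at h1; rw [hgj] at h2
      rw [← h1, ← h2, hdiv]
    · -- i guard, j not
      exfalso
      have h1 := g_guard_le_one hk hkl hgi
      have h2 : 1 < gseq k ℓ j := by
        by_cases hrun : j < ℓ
        · exact g_run_gt_one hk hkl hj hrun
        · have := g_bulk_ge_two hk hkl hgj hrun; linarith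
      rw [hg] at h1; linarith
  · by_cases hgj : j % ℓ = 0
    · exfalso
      have h1 := g_guard_le_one hk hkl hgj
      have h2 : 1 < gseq k ℓ i := by
        by_cases hrun : i < ℓ
        · exact g_run_gt_one hk hkl hi hrun
        · have := g_bulk_ge_two hk hkl hgi hrun; linarith
      rw [← hg] at h1; linarith
    · by_cases hri : i < ℓ
      · by_cases hrj : j < ℓ
        · -- both run
          rw [g_run_eq hk hkl hi hri, g_run_eq hk hkl hj hrj] at hg
          have hlq : (0:ℚ) < (ℓ:ℚ) := by exact_mod_cast hl0
          have : (i:ℚ) = (j:ℚ) := by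
            field_simp at hg
            linarith
          exact_mod_cast this
        · exfalso
          have h1 := g_run_lt_two hk hkl hi hri
          have h2 := g_bulk_ge_two hk hkl hgj hrj
          rw [hg] at h1; linarith
      · by_cases hrj : j < ℓ
        · exfalso
          have h1 := g_run_lt_two hk hkl hj hrj
          have h2 := g_bulk_ge_two hk hkl hgi hri
          rw [← hg] at h1; linarith
        · -- both bulk
          rw [g_bulk_eq hk hkl hgi hri, g_bulk_eq hk hkl hgj hrj] at hg
          exact phi_inj hM2 _ _ (by linarith)

variable (k ℓ)

/-- the crucial permutation of length `n` : rank of `gseq (n+1-i)` among `gseq 1, …, gseq n`. -/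
def cperm (n i : ℕ) : ℕ :=
  ((Finset.Icc 1 n).filter (fun j => gseq k ℓ j ≤ gseq k ℓ (n + 1 - i))).card

variable {k ℓ}
variable (hk : 5 ≤ k) (hkl : k ≤ ℓ)

lemma cperm_pos {n i : ℕ} (hi : 1 ≤ i) (hin : i ≤ n) : 1 ≤ cperm k ℓ n i :=
  Finset.card_pos.2 ⟨n + 1 - i, Finset.mem_filter.2 ⟨Finset.mem_Icc.2 (by omega), le_refl _⟩⟩

lemma cperm_le {n i : ℕ} : cperm k ℓ n i ≤ n := by
  calc cperm k ℓ n i ≤ (Finset.Icc 1 n).card := Finset.card_filter_le _ _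
  _ = n := by rw [Nat.card_Icc]; omega

include hk hkl in
lemma cperm_lt_of_g_lt {n i i' : ℕ}
    (hgl : gseq k ℓ (n + 1 - i) < gseq k ℓ (n + 1 - i')) (hi : 1 ≤ i) (hin : i ≤ n)
    (hi' : 1 ≤ i') (hin' : i' ≤ n) : cperm k ℓ n i < cperm k ℓ n i' := by
  apply Finset.card_lt_card
  constructor
  · intro j hj
    rw [Finset.mem_filter] at hj ⊢
    exact ⟨hj.1, le_trans hj.2 (le_of_lt hgl)⟩
  · intro hsub
    have hmem : n + 1 - i' ∈ (Finset.Icc 1 n).filter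
        (fun j => gseq k ℓ j ≤ gseq k ℓ (n + 1 - i')) :=
      Finset.mem_filter.2 ⟨Finset.mem_Icc.2 (by omega), le_refl _⟩
    have := hsub hmem
    rw [Finset.mem_filter] at this
    exact absurd this.2 (by linarith)

include hk hkl in
lemma cperm_lt_iff {n i i' : ℕ} (hi : 1 ≤ i) (hin : i ≤ n) (hi' : 1 ≤ i') (hin' : i' ≤ n) :
    cperm k ℓ n i < cperm k ℓ n i' ↔ gseq k ℓ (n + 1 - i) < gseq k ℓ (n + 1 - i') := by
  constructor
  · intro hlt
    rcases lt_trichotomy (gseq k ℓ (n + 1 - i)) (gseq k ℓ (n + 1 - i')) with hc | hc | hc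
    · exact hc
    · exfalso
      have : n + 1 - i = n + 1 - i' := g_inj hk hkl (by omega) (by omega) hc
      have : i = i' := by omega
      subst this
      omega
    · exfalso
      have := cperm_lt_of_g_lt hk hkl hc hi' hin' hi hin
      omega
  · intro hgl
    exact cperm_lt_of_g_lt hk hkl hgl hi hin hi' hin'

include hk hkl in
lemma cperm_isPerm {n : ℕ} : IsPermutation n (cperm k ℓ n) := by
  refine ⟨fun i h1 h2 => ⟨cperm_pos h1 h2, cperm_le⟩, ?_, ?_⟩
  · intro i j h1 h2 h3 h4 heq
    rcases lt_trichotomy (gseq k ℓ (n + 1 - i)) (gseq k ℓ (n + 1 - j)) with hc | hc | hc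
    · have := cperm_lt_of_g_lt hk hkl hc h1 h2 h3 h4; omega
    · have := g_inj hk hkl (by omega : 1 ≤ n + 1 - i) (by omega : 1 ≤ n + 1 - j) hc
      omega
    · have := cperm_lt_of_g_lt hk hkl hc h3 h4 h1 h2; omega
  · intro v hv1 hv2
    have hmaps : ∀ i ∈ Finset.Icc 1 n, cperm k ℓ n i ∈ Finset.Icc 1 n := by
      intro i hi
      rw [Finset.mem_Icc] at hi ⊢
      exact ⟨cperm_pos hi.1 hi.2, cperm_le⟩
    have hinj : ∀ i ∈ Finset.Icc 1 n, ∀ j ∈ Finset.Icc 1 n,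
        cperm k ℓ n i = cperm k ℓ n j → i = j := by
      intro i hi j hj heq
      rw [Finset.mem_Icc] at hi hj
      rcases lt_trichotomy (gseq k ℓ (n + 1 - i)) (gseq k ℓ (n + 1 - j)) with hc | hc | hc
      · have := cperm_lt_of_g_lt hk hkl hc hi.1 hi.2 hj.1 hj.2; omega
      · have := g_inj hk hkl (by omega : 1 ≤ n + 1 - i) (by omega : 1 ≤ n + 1 - j) hc
        omega
      · have := cperm_lt_of_g_lt hk hkl hc hj.1 hj.2 hi.1 hi.2; omega
    have hsurj := Finset.surj_on_of_inj_on_of_card_le (s := Finset.Icc 1 n) (t := Finset.Icc 1 n)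
      (fun i _ => cperm k ℓ n i) (fun a ha => hmaps a ha)
      (fun a₁ a₂ ha₁ ha₂ hh => hinj a₁ ha₁ a₂ ha₂ hh) (le_refl _)
    obtain ⟨i, hi, hieq⟩ := hsurj v (Finset.mem_Icc.2 ⟨hv1, hv2⟩)
    rw [Finset.mem_Icc] at hi
    exact ⟨i, hi.1, hi.2, hieq.symm⟩

end Perm


section Final

variable {k ℓ : ℕ} (hk : 5 ≤ k) (hkl : k ≤ ℓ)

include hk hkl in
lemma cperm_noInc {n : ℕ} : ¬ HasArithInc n k (cperm k ℓ n) := by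
  rintro ⟨i, d, h1, hd, hle, hm⟩
  have hq1 : 1 ≤ n + 1 - (i + (k - 1) * d) := by omega
  apply g_noDec hk hkl (n + 1 - (i + (k - 1) * d)) d hq1 hd
  intro s hs
  have hj := hm (k - 2 - s) (by omega)
  have hjj : k - 2 - s + 1 = k - 1 - s := by omega
  rw [hjj] at hj
  have hmul1 : (k - 2 - s) * d ≤ (k - 1) * d := Nat.mul_le_mul_right _ (by omega)
  have hmul2 : (k - 1 - s) * d ≤ (k - 1) * d := Nat.mul_le_mul_right _ (by omega)
  have hiso := (cperm_lt_iff hk hkl (n := n) (i := i + (k - 2 - s) * d)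
    (i' := i + (k - 1 - s) * d) (by omega) (by omega) (by omega) (by omega)).1 hj
  have hsplit1 : (k - 2 - s) * d + (s + 1) * d = (k - 1) * d := by
    rw [← Nat.add_mul]; congr 1; omega
  have hsplit2 : (k - 1 - s) * d + s * d = (k - 1) * d := by
    rw [← Nat.add_mul]; congr 1; omega
  have e1 : n + 1 - (i + (k - 2 - s) * d) = (n + 1 - (i + (k - 1) * d)) + (s + 1) * d := by
    omega
  have e2 : n + 1 - (i + (k - 1 - s) * d) = (n + 1 - (i + (k - 1) * d)) + s * d := by
    omega
  rw [e1, e2] at hiso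
  exact hiso

include hk hkl in
lemma cperm_noDec {n : ℕ} : ¬ HasArithDec n ℓ (cperm k ℓ n) := by
  rintro ⟨i, d, h1, hd, hle, hm⟩
  have hq1 : 1 ≤ n + 1 - (i + (ℓ - 1) * d) := by omega
  apply g_noInc hk hkl (n + 1 - (i + (ℓ - 1) * d)) d hq1 hd
  intro s hs
  have hj := hm (ℓ - 2 - s) (by omega)
  have hjj : ℓ - 2 - s + 1 = ℓ - 1 - s := by omega
  rw [hjj] at hj
  have hmul1 : (ℓ - 2 - s) * d ≤ (ℓ - 1) * d := Nat.mul_le_mul_right _ (by omega)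
  have hmul2 : (ℓ - 1 - s) * d ≤ (ℓ - 1) * d := Nat.mul_le_mul_right _ (by omega)
  have hiso := (cperm_lt_iff hk hkl (n := n) (i := i + (ℓ - 1 - s) * d)
    (i' := i + (ℓ - 2 - s) * d) (by omega) (by omega) (by omega) (by omega)).1 hj
  have hsplit1 : (ℓ - 2 - s) * d + (s + 1) * d = (ℓ - 1) * d := by
    rw [← Nat.add_mul]; congr 1; omega
  have hsplit2 : (ℓ - 1 - s) * d + s * d = (ℓ - 1) * d := by
    rw [← Nat.add_mul]; congr 1; omega
  have e1 : n + 1 - (i + (ℓ - 2 - s) * d) = (n + 1 - (i + (ℓ - 1) * d)) + (s + 1) * d := by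
    omega
  have e2 : n + 1 - (i + (ℓ - 1 - s) * d) = (n + 1 - (i + (ℓ - 1) * d)) + s * d := by
    omega
  rw [e1, e2] at hiso
  exact hiso

lemma ext_at {n x : ℕ} (π : ℕ → ℕ) {p : ℕ} (hp : p ≤ n) :
    ExtendRight n π x p = if x ≤ π p then π p + 1 else π p := by
  simp only [ExtendRight]
  rw [if_neg (by omega)]

lemma ext_last {n x : ℕ} (π : ℕ → ℕ) : ExtendRight n π x (n + 1) = x := by
  simp [ExtendRight]

include hk hkl in
lemma g_guard_val {t : ℕ} (h1 : 1 ≤ t) (ht : t ≤ k - 1) :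
    gseq k ℓ (ℓ * t) = 1 - ((t - 1 : ℕ) : ℚ) / ((k - 1 : ℕ) : ℚ) := by
  have hl0 : 0 < ℓ := by omega
  rw [g_guard_eq hk hkl (Nat.mul_mod_right ℓ t)]
  rw [Nat.mul_div_cancel_left t hl0]
  rw [phi_single (by omega : 2 ≤ k - 1) (by omega : t - 1 < k - 1)]

include hk hkl in
theorem cperm_crucial_ext {n : ℕ} (hn : ℓ * (k - 1) ≤ n) (x : ℕ) (hx1 : 1 ≤ x)
    (hx2 : x ≤ n + 1) : ¬ AntiMonotone (n + 1) k ℓ (ExtendRight n (cperm k ℓ n) x) := by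
  rintro ⟨hInc, hDec⟩
  have hl0 : 0 < ℓ := by omega
  have hlk : 5 * 4 ≤ ℓ * (k - 1) := Nat.mul_le_mul (by omega) (by omega)
  have hn20 : 20 ≤ n := by omega
  have hlln : ℓ ≤ n := by
    have : ℓ * 1 ≤ ℓ * (k - 1) := Nat.mul_le_mul_left _ (by omega)
    omega
  by_cases hcase : x ≤ cperm k ℓ n n
  · -- decreasing ℓ-AP with d = 1 ending at n+1
    apply hDec
    refine ⟨n + 2 - ℓ, 1, by omega, le_refl 1, by omega, ?_⟩
    intro j hj
    simp only [mul_one]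
    by_cases hlast : j + 1 = ℓ - 1
    · have hp1 : n + 2 - ℓ + j = n := by omega
      have hp2 : n + 2 - ℓ + (j + 1) = n + 1 := by omega
      rw [hp1, hp2, ext_at _ (le_refl n), ext_last, if_pos hcase]
      omega
    · have hb1 : n + 2 - ℓ + j ≤ n := by omega
      have hb2 : n + 2 - ℓ + (j + 1) ≤ n := by omega
      have hpi : cperm k ℓ n (n + 2 - ℓ + (j + 1)) < cperm k ℓ n (n + 2 - ℓ + j) := by
        rw [cperm_lt_iff hk hkl (by omega) hb2 (by omega) hb1]
        have e1 : n + 1 - (n + 2 - ℓ + (j + 1)) = ℓ - 2 - j := by omega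
        have e2 : n + 1 - (n + 2 - ℓ + j) = ℓ - 1 - j := by omega
        rw [e1, e2, g_run_eq hk hkl (by omega) (by omega),
          g_run_eq hk hkl (by omega) (by omega)]
        have hcast : ((ℓ - 2 - j : ℕ) : ℚ) < ((ℓ - 1 - j : ℕ) : ℚ) := by
          exact_mod_cast (by omega : ℓ - 2 - j < ℓ - 1 - j)
        have hlq : (0 : ℚ) < (ℓ : ℚ) := by exact_mod_cast hl0
        have := div_lt_div_of_pos_right hcast hlq
        linarith
      rw [ext_at _ hb1, ext_at _ hb2]
      split_ifs <;> omega
  · -- increasing k-AP with d = ℓ ending at n+1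
    push_neg at hcase
    apply hInc
    have hcomm : (k - 1) * ℓ = ℓ * (k - 1) := Nat.mul_comm _ _
    refine ⟨n + 1 - ℓ * (k - 1), ℓ, by omega, by omega, by omega, ?_⟩
    intro j hj
    have hjsplit : ∀ m : ℕ, m ≤ k - 1 → ℓ * (k - 1 - m) + m * ℓ = ℓ * (k - 1) := by
      intro m hm
      have : ℓ * (k - 1 - m) + m * ℓ = ℓ * ((k - 1 - m) + m) := by ring
      rw [this]
      congr 1
      omega
    by_cases hlast : j + 1 = k - 1
    · have hp1 : n + 1 - ℓ * (k - 1) + j * ℓ = n + 1 - ℓ := by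
        have := hjsplit j (by omega)
        have hone : ℓ * (k - 1 - j) = ℓ := by
          have : k - 1 - j = 1 := by omega
          rw [this, Nat.mul_one]
        omega
      have hp2 : n + 1 - ℓ * (k - 1) + (j + 1) * ℓ = n + 1 := by
        have := hjsplit (j + 1) (by omega)
        have hzero : ℓ * (k - 1 - (j + 1)) = 0 := by
          have : k - 1 - (j + 1) = 0 := by omega
          rw [this, Nat.mul_zero]
        omega
      rw [hp1, hp2, ext_at _ (by omega), ext_last]
      have hC : cperm k ℓ n (n + 1 - ℓ) < cperm k ℓ n n := by
        rw [cperm_lt_iff hk hkl (by omega) (by omega) (by omega) (le_refl n)]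
        have e1 : n + 1 - (n + 1 - ℓ) = ℓ := by omega
        have e2 : n + 1 - n = 1 := by omega
        rw [e1, e2]
        have hgl : gseq k ℓ ℓ = 1 := by
          rw [g_guard_eq hk hkl (Nat.mod_self ℓ), Nat.div_self hl0]
          norm_num [phi_zero]
        rw [hgl]
        exact g_run_gt_one hk hkl (le_refl 1) (by omega)
      split_ifs <;> omega
    · -- both positions ≤ n : guard chain comparison
      have hb2 : n + 1 - ℓ * (k - 1) + (j + 1) * ℓ ≤ n := by
        have := hjsplit (j + 1) (by omega)
        have hpos : ℓ * 1 ≤ ℓ * (k - 1 - (j + 1)) := Nat.mul_le_mul_left _ (by omega)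
        omega
      have hb1 : n + 1 - ℓ * (k - 1) + j * ℓ ≤ n := by
        have h1 : j * ℓ ≤ (j + 1) * ℓ := Nat.mul_le_mul_right _ (by omega)
        omega
      have hpi : cperm k ℓ n (n + 1 - ℓ * (k - 1) + j * ℓ) <
          cperm k ℓ n (n + 1 - ℓ * (k - 1) + (j + 1) * ℓ) := by
        rw [cperm_lt_iff hk hkl (by omega) hb1 (by omega) hb2]
        have e1 : n + 1 - (n + 1 - ℓ * (k - 1) + j * ℓ) = ℓ * (k - 1 - j) := by
          have := hjsplit j (by omega)
          omega
        have e2 : n + 1 - (n + 1 - ℓ * (k - 1) + (j + 1) * ℓ) = ℓ * (k - 1 - (j + 1)) := by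
          have := hjsplit (j + 1) (by omega)
          omega
        rw [e1, e2, g_guard_val hk hkl (by omega) (by omega),
          g_guard_val hk hkl (by omega) (by omega)]
        have hcast : ((k - 1 - (j + 1) - 1 : ℕ) : ℚ) < ((k - 1 - j - 1 : ℕ) : ℚ) := by
          exact_mod_cast (by omega : k - 1 - (j + 1) - 1 < k - 1 - j - 1)
        have hkq : (0 : ℚ) < ((k - 1 : ℕ) : ℚ) := by
          exact_mod_cast (by omega : 0 < k - 1)
        have := div_lt_div_of_pos_right hcast hkq
        linarith
      rw [ext_at _ hb1, ext_at _ hb2]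
      split_ifs <;> omega

end Final

end Main

end CrucialAux

/-- For `5 ≤ k ≤ l` and every `n ≥ l*(k-1)`, there is a `(k,l)`-crucial
permutation of length `n`. -/
theorem crucial_exists_all_lengths (k l n : ℕ) (hk : 5 ≤ k) (hkl : k ≤ l)
    (hn : l * (k - 1) ≤ n) :
    ∃ π : ℕ → ℕ, Crucial n k l π := by
  refine ⟨CrucialAux.cperm k l n, CrucialAux.cperm_isPerm hk hkl,
    ⟨CrucialAux.cperm_noInc hk hkl, CrucialAux.cperm_noDec hk hkl⟩, ?_⟩
  intro x hx1 hx2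
  exact CrucialAux.cperm_crucial_ext hk hkl hn x hx1 hx2
end

section
/- For every integer ℓ ≥ 4 there exists a (4,ℓ)-crucial permutation of length 3ℓ. -/
set_option maxHeartbeats 4000000

/-- The explicit `(4,l)`-crucial permutation of length `3l`:
`1`, then `2l, 2l-1, …, l+3` (positions `2..l-1`), then `2l+1` (position `l`),
then `3, 2` (positions `l+1, l+2`), then `l+2, l+1, …, 4` (positions `l+3..2l+1`),
then `3l, 3l-1, …, 2l+2` (positions `2l+2..3l`). -/
def cperm (l : ℕ) : ℕ → ℕ := fun p =>
  if p = 1 then 1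
  else if p ≤ l - 1 then 2*l + 2 - p
  else if p = l then 2*l + 1
  else if p = l + 1 then 3
  else if p = l + 2 then 2
  else if p ≤ 2*l + 1 then 2*l + 5 - p
  else 5*l + 2 - p

/-- Inverse of `cperm`. -/
def cpinv (l : ℕ) : ℕ → ℕ := fun v =>
  if v = 1 then 1
  else if v = 2 then l + 2
  else if v = 3 then l + 1
  else if v ≤ l + 2 then 2*l + 5 - v
  else if v ≤ 2*l then 2*l + 2 - v
  else if v = 2*l + 1 then l
  else 5*l + 2 - v

/-- Characterization of ascending pairs of `cperm`. -/
lemma cperm_incPair (l p q : ℕ) (hl : 4 ≤ l) (hp : 1 ≤ p) (hpq : p < q) (hq : q ≤ 3*l)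
    (h : cperm l p < cperm l q) :
    p = 1 ∨ (2*l+2 ≤ q ∧ p ≤ 2*l+1) ∨ (2 ≤ p ∧ p ≤ l-1 ∧ q = l) ∨
      (l+1 ≤ p ∧ p ≤ l+2 ∧ l+3 ≤ q ∧ q ≤ 2*l+1) := by
  unfold cperm at h
  split_ifs at h <;> omega

/-- For every `l ≥ 4` there is a `(4,l)`-crucial permutation of length `3*l`. -/
theorem crucial_4_l (l : ℕ) (hl : 4 ≤ l) :
    ∃ π : ℕ → ℕ, Crucial (3 * l) 4 l π := by
  refine ⟨cperm l, ⟨?_, ?_, ?_⟩, ⟨?_, ?_⟩, ?_⟩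
  · -- bounds
    intro i h1 h2
    unfold cperm
    split_ifs <;> omega
  · -- injective
    intro i j h1 h2 h3 h4 h
    unfold cperm at h
    split_ifs at h <;> omega
  · -- surjective
    intro v h1 h2
    rcases (by omega : v = 1 ∨ v = 2 ∨ v = 3 ∨ (4 ≤ v ∧ v ≤ l+2) ∨ (l+3 ≤ v ∧ v ≤ 2*l) ∨
        v = 2*l+1 ∨ (2*l+2 ≤ v ∧ v ≤ 3*l)) with hc | hc | hc | hc | hc | hc | hc
    · exact ⟨1, by omega, by omega, by unfold cperm; split_ifs <;> omega⟩
    · exact ⟨l+2, by omega, by omega, by unfold cperm; split_ifs <;> omega⟩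
    · exact ⟨l+1, by omega, by omega, by unfold cperm; split_ifs <;> omega⟩
    · exact ⟨2*l+5-v, by omega, by omega, by unfold cperm; split_ifs <;> omega⟩
    · exact ⟨2*l+2-v, by omega, by omega, by unfold cperm; split_ifs <;> omega⟩
    · exact ⟨l, by omega, by omega, by unfold cperm; split_ifs <;> omega⟩
    · exact ⟨5*l+2-v, by omega, by omega, by unfold cperm; split_ifs <;> omega⟩
  · -- no increasing arithmetic subsequence of length 4
    rintro ⟨i, d, hi, hd, hle, hmono⟩
    have hle' : i + 3*d ≤ 3*l := by omega
    have h0 := hmono 0 (by norm_num)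
    have h1 := hmono 1 (by norm_num)
    have h2 := hmono 2 (by norm_num)
    norm_num at h0 h1 h2
    have c0 := cperm_incPair l i (i+d) hl hi (by omega) (by omega) h0
    have c1 := cperm_incPair l (i+d) (i+2*d) hl (by omega) (by omega) (by omega) h1
    have c2 := cperm_incPair l (i+2*d) (i+3*d) hl (by omega) (by omega) (by omega) h2
    rcases c0 with c0 | c0 | c0 | c0 <;> rcases c1 with c1 | c1 | c1 | c1 <;>
      rcases c2 with c2 | c2 | c2 | c2 <;> omega
  · -- no decreasing arithmetic subsequence of length l
    rintro ⟨i, d, hi, hd, hle, hmono⟩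
    have hd3 : d ≤ 3 := by
      by_contra hcon
      push_neg at hcon
      have h4 : (l-1) * 4 ≤ (l-1) * d := Nat.mul_le_mul_left _ (by omega)
      omega
    interval_cases d
    · -- d = 1
      have hile : i + (l-1) ≤ 3*l := by
        have := hle; omega
      rcases (by omega : i = 1 ∨ (2 ≤ i ∧ i ≤ l-1) ∨ (l ≤ i ∧ i ≤ l+2) ∨
          (l+3 ≤ i ∧ i ≤ 2*l+1)) with hc | hc | hc | hc
      · have key := hmono 0 (by omega)
        simp only [Nat.mul_one, Nat.zero_mul, Nat.add_zero, Nat.zero_add] at key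
        unfold cperm at key
        split_ifs at key <;> omega
      · have key := hmono (l-1-i) (by omega)
        simp only [Nat.mul_one] at key
        unfold cperm at key
        split_ifs at key <;> omega
      · have key := hmono (l+2-i) (by omega)
        simp only [Nat.mul_one] at key
        unfold cperm at key
        split_ifs at key <;> omega
      · have key := hmono (2*l+1-i) (by omega)
        simp only [Nat.mul_one] at key
        unfold cperm at key
        split_ifs at key <;> omega
    · -- d = 2
      have hile : i ≤ l + 2 := by
        have h2 : (l-1) * 2 = 2*l - 2 := by omega
        omega
      have key := hmono ((l+2-i)/2) (by omega)
      unfold cperm at key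
      split_ifs at key <;> omega
    · -- d = 3
      have hile : i ≤ 3 := by
        have h3 : (l-1) * 3 = 3*l - 3 := by omega
        omega
      have key := hmono ((2*l+1-i)/3) (by omega)
      unfold cperm at key
      split_ifs at key <;> omega
  · -- cruciality: every right extension fails
    intro x hx1 hx2
    rintro ⟨hInc, hDec⟩
    have E4 : ExtendRight (3*l) (cperm l) x (3*l+1) = x := by
      unfold ExtendRight
      rw [if_pos rfl]
    by_cases hx : x ≤ 2*l + 2
    · -- decreasing chain 2l+2, …, 3l+1 with difference 1
      have hv : ∀ p, 2*l+2 ≤ p → p ≤ 3*l → ExtendRight (3*l) (cperm l) x p = 5*l+3-p := by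
        intro p h1 h2
        have hc : cperm l p = 5*l+2-p := by unfold cperm; split_ifs <;> omega
        unfold ExtendRight
        rw [hc]
        split_ifs <;> omega
      apply hDec
      refine ⟨2*l+2, 1, by omega, le_refl _, by omega, ?_⟩
      intro j hj
      simp only [Nat.mul_one]
      by_cases hj2 : j + 1 ≤ l - 2
      · rw [hv (2*l+2+j) (by omega) (by omega), hv (2*l+2+(j+1)) (by omega) (by omega)]
        omega
      · have e : 2*l+2+(j+1) = 3*l+1 := by omega
        rw [hv (2*l+2+j) (by omega) (by omega), e, E4]
        omega
    · -- increasing chain 1, l+1, 2l+1, 3l+1 with difference l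
      have hv1 : ExtendRight (3*l) (cperm l) x 1 = 1 := by
        have hc : cperm l 1 = 1 := by unfold cperm; split_ifs <;> omega
        unfold ExtendRight
        rw [hc]
        split_ifs <;> omega
      have hv2 : ExtendRight (3*l) (cperm l) x (l+1) = 3 := by
        have hc : cperm l (l+1) = 3 := by unfold cperm; split_ifs <;> omega
        unfold ExtendRight
        rw [hc]
        split_ifs <;> omega
      have hv3 : ExtendRight (3*l) (cperm l) x (2*l+1) = 4 := by
        have hc : cperm l (2*l+1) = 4 := by unfold cperm; split_ifs <;> omega
        unfold ExtendRight
        rw [hc]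
        split_ifs <;> omega
      apply hInc
      refine ⟨1, l, le_refl _, by omega, by omega, ?_⟩
      intro j hj
      rcases (by omega : j = 0 ∨ j = 1 ∨ j = 2) with rfl | rfl | rfl
      · have a : 1 + 0 * l = 1 := by ring
        have b : 1 + (0+1) * l = l + 1 := by ring
        rw [a, b, hv1, hv2]
        omega
      · have a : 1 + 1 * l = l + 1 := by ring
        have b : 1 + (1+1) * l = 2*l + 1 := by ring
        rw [a, b, hv2, hv3]
        omega
      · have a : 1 + 2 * l = 2*l + 1 := by ring
        have b : 1 + (2+1) * l = 3*l + 1 := by ring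
        rw [a, b, hv3, E4]
        omega
end

section
/- For all integers k, ℓ ≥ 3: if there exists a (k,ℓ)-crucial permutation of length n, then there exists a (k,ℓ)-crucial permutation of length 2n. -/
/-- The doubling construction: `σ(2p-1) = π p`, `σ(2p) = π p + n`. -/
def Dbl (n : ℕ) (π : ℕ → ℕ) : ℕ → ℕ :=
  fun i => if i % 2 = 1 then π ((i + 1) / 2) else π (i / 2) + n

lemma dbl_odd (n : ℕ) (π : ℕ → ℕ) (p : ℕ) (hp : 1 ≤ p) :
    Dbl n π (2 * p - 1) = π p := by
  have h1 : (2 * p - 1) % 2 = 1 := by omega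
  have h2 : ((2 * p - 1) + 1) / 2 = p := by omega
  simp only [Dbl, if_pos h1, h2]

lemma dbl_even (n : ℕ) (π : ℕ → ℕ) (p : ℕ) (hp : 1 ≤ p) :
    Dbl n π (2 * p) = π p + n := by
  have h1 : ¬ ((2 * p) % 2 = 1) := by omega
  have h2 : (2 * p) / 2 = p := by omega
  simp only [Dbl, if_neg h1, h2]

lemma dbl_perm {n : ℕ} {π : ℕ → ℕ} (h : IsPermutation n π) :
    IsPermutation (2 * n) (Dbl n π) := by
  obtain ⟨hr, hinj, hsur⟩ := h
  refine ⟨?_, ?_, ?_⟩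
  · intro i h1 h2
    by_cases hp : i % 2 = 1
    · have := hr ((i + 1) / 2) (by omega) (by omega)
      simp only [Dbl, if_pos hp]
      omega
    · have := hr (i / 2) (by omega) (by omega)
      simp only [Dbl, if_neg hp]
      omega
  · intro i j h1 h2 h3 h4 heq
    by_cases hp : i % 2 = 1 <;> by_cases hq : j % 2 = 1
    · simp only [Dbl, if_pos hp, if_pos hq] at heq
      have := hinj ((i + 1) / 2) ((j + 1) / 2) (by omega) (by omega) (by omega) (by omega) heq
      omega
    · simp only [Dbl, if_pos hp, if_neg hq] at heq
      have b1 := hr ((i + 1) / 2) (by omega) (by omega)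
      have b2 := hr (j / 2) (by omega) (by omega)
      omega
    · simp only [Dbl, if_neg hp, if_pos hq] at heq
      have b1 := hr (i / 2) (by omega) (by omega)
      have b2 := hr ((j + 1) / 2) (by omega) (by omega)
      omega
    · simp only [Dbl, if_neg hp, if_neg hq] at heq
      have := hinj (i / 2) (j / 2) (by omega) (by omega) (by omega) (by omega) (by omega)
      omega
  · intro v h1 h2
    by_cases hv : v ≤ n
    · obtain ⟨p, hp1, hp2, hp3⟩ := hsur v h1 hv
      exact ⟨2 * p - 1, by omega, by omega, by rw [dbl_odd n π p hp1]; exact hp3⟩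
    · obtain ⟨p, hp1, hp2, hp3⟩ := hsur (v - n) (by omega) (by omega)
      exact ⟨2 * p, by omega, by omega, by rw [dbl_even n π p hp1]; omega⟩

lemma dbl_low {n : ℕ} {π : ℕ → ℕ} (h : IsPermutation n π) (m : ℕ)
    (hm : m % 2 = 1) (h1 : 1 ≤ m) (h2 : m ≤ 2 * n) :
    1 ≤ Dbl n π m ∧ Dbl n π m ≤ n := by
  have := h.1 ((m + 1) / 2) (by omega) (by omega)
  simp only [Dbl, if_pos hm]
  omega

lemma dbl_high {n : ℕ} {π : ℕ → ℕ} (h : IsPermutation n π) (m : ℕ)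
    (hm : m % 2 = 0) (h1 : 1 ≤ m) (h2 : m ≤ 2 * n) :
    n + 1 ≤ Dbl n π m := by
  have := h.1 (m / 2) (by omega) (by omega)
  simp only [Dbl, if_neg (show ¬ (m % 2 = 1) by omega)]
  omega

lemma dbl_anti {n k l : ℕ} {π : ℕ → ℕ} (hk : 3 ≤ k) (hl : 3 ≤ l)
    (h : IsPermutation n π) (ha : AntiMonotone n k l π) :
    AntiMonotone (2 * n) k l (Dbl n π) := by
  constructor
  · rintro ⟨i, d, hi, hd, hb, hm⟩
    by_cases hpar : d % 2 = 0
    · -- even difference: reduce to π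
      obtain ⟨d', rfl⟩ : ∃ d', d = 2 * d' := ⟨d / 2, by omega⟩
      have hkd : (k - 1) * (2 * d') = 2 * ((k - 1) * d') := by ring
      by_cases hip : i % 2 = 1
      · obtain ⟨a, rfl⟩ : ∃ a, i = 2 * a + 1 := ⟨i / 2, by omega⟩
        refine ha.1 ⟨a + 1, d', by omega, by omega, ?_, ?_⟩
        · rw [hkd] at hb; omega
        · intro j hj
          have H := hm j hj
          have e1 : 2 * a + 1 + j * (2 * d') = 2 * (a + 1 + j * d') - 1 := by
            have : j * (2 * d') = 2 * (j * d') := by ring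
            omega
          have e2 : 2 * a + 1 + (j + 1) * (2 * d') = 2 * (a + 1 + (j + 1) * d') - 1 := by
            have : (j + 1) * (2 * d') = 2 * ((j + 1) * d') := by ring
            omega
          rwa [e1, e2, dbl_odd n π _ (by omega), dbl_odd n π _ (by omega)] at H
      · obtain ⟨a, rfl⟩ : ∃ a, i = 2 * a := ⟨i / 2, by omega⟩
        refine ha.1 ⟨a, d', by omega, by omega, ?_, ?_⟩
        · rw [hkd] at hb; omega
        · intro j hj
          have H := hm j hj
          have e1 : 2 * a + j * (2 * d') = 2 * (a + j * d') := by
            have : j * (2 * d') = 2 * (j * d') := by ring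
            omega
          have e2 : 2 * a + (j + 1) * (2 * d') = 2 * (a + (j + 1) * d') := by
            have : (j + 1) * (2 * d') = 2 * ((j + 1) * d') := by ring
            omega
          rw [e1, e2, dbl_even n π _ (by omega), dbl_even n π _ (by omega)] at H
          omega
    · -- odd difference: three consecutive terms alternate low/high
      have h2d : i + 2 * d ≤ 2 * n := by
        have : 2 * d ≤ (k - 1) * d := Nat.mul_le_mul_right d (by omega)
        omega
      have H0 := hm 0 (by omega)
      have H1 := hm 1 (by omega)
      simp only [Nat.zero_mul, Nat.one_mul, Nat.add_zero, Nat.zero_add] at H0 H1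
      have e1 : (1 + 1) * d = 2 * d := by ring
      rw [e1] at H1
      by_cases hip : i % 2 = 1
      · have l1 := dbl_high h (i + d) (by omega) (by omega) (by omega)
        have l2 := dbl_low h (i + 2 * d) (by omega) (by omega) (by omega)
        omega
      · have l1 := dbl_high h i (by omega) (by omega) (by omega)
        have l2 := dbl_low h (i + d) (by omega) (by omega) (by omega)
        omega
  · rintro ⟨i, d, hi, hd, hb, hm⟩
    by_cases hpar : d % 2 = 0
    · obtain ⟨d', rfl⟩ : ∃ d', d = 2 * d' := ⟨d / 2, by omega⟩
      have hkd : (l - 1) * (2 * d') = 2 * ((l - 1) * d') := by ring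
      by_cases hip : i % 2 = 1
      · obtain ⟨a, rfl⟩ : ∃ a, i = 2 * a + 1 := ⟨i / 2, by omega⟩
        refine ha.2 ⟨a + 1, d', by omega, by omega, ?_, ?_⟩
        · rw [hkd] at hb; omega
        · intro j hj
          have H := hm j hj
          have e1 : 2 * a + 1 + j * (2 * d') = 2 * (a + 1 + j * d') - 1 := by
            have : j * (2 * d') = 2 * (j * d') := by ring
            omega
          have e2 : 2 * a + 1 + (j + 1) * (2 * d') = 2 * (a + 1 + (j + 1) * d') - 1 := by
            have : (j + 1) * (2 * d') = 2 * ((j + 1) * d') := by ring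
            omega
          rwa [e1, e2, dbl_odd n π _ (by omega), dbl_odd n π _ (by omega)] at H
      · obtain ⟨a, rfl⟩ : ∃ a, i = 2 * a := ⟨i / 2, by omega⟩
        refine ha.2 ⟨a, d', by omega, by omega, ?_, ?_⟩
        · rw [hkd] at hb; omega
        · intro j hj
          have H := hm j hj
          have e1 : 2 * a + j * (2 * d') = 2 * (a + j * d') := by
            have : j * (2 * d') = 2 * (j * d') := by ring
            omega
          have e2 : 2 * a + (j + 1) * (2 * d') = 2 * (a + (j + 1) * d') := by
            have : (j + 1) * (2 * d') = 2 * ((j + 1) * d') := by ring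
            omega
          rw [e1, e2, dbl_even n π _ (by omega), dbl_even n π _ (by omega)] at H
          omega
    · have h2d : i + 2 * d ≤ 2 * n := by
        have : 2 * d ≤ (l - 1) * d := Nat.mul_le_mul_right d (by omega)
        omega
      have H0 := hm 0 (by omega)
      have H1 := hm 1 (by omega)
      simp only [Nat.zero_mul, Nat.one_mul, Nat.add_zero, Nat.zero_add] at H0 H1
      have e1 : (1 + 1) * d = 2 * d := by ring
      rw [e1] at H1
      by_cases hip : i % 2 = 1
      · have l1 := dbl_low h i hip (by omega) (by omega)
        have l2 := dbl_high h (i + d) (by omega) (by omega) (by omega)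
        omega
      · have l1 := dbl_low h (i + d) (by omega) (by omega) (by omega)
        have l2 := dbl_high h (i + 2 * d) (by omega) (by omega) (by omega)
        omega

/-- Comparison transfer between the extension of π by `min x (n+1)` and the
extension of the doubled permutation by `x`, along odd positions. -/
lemma dbl_cmp {n : ℕ} {π : ℕ → ℕ} (h : IsPermutation n π) (hn : 1 ≤ n)
    (x : ℕ) (hx1 : 1 ≤ x) (hx2 : x ≤ 2 * n + 1)
    (p : ℕ) (hp1 : 1 ≤ p) (hp2 : p ≤ n + 1)
    (q : ℕ) (hq1 : 1 ≤ q) (hq2 : q ≤ n + 1) :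
    (ExtendRight n π (min x (n + 1)) p < ExtendRight n π (min x (n + 1)) q ↔
      ExtendRight (2 * n) (Dbl n π) x (2 * p - 1) <
        ExtendRight (2 * n) (Dbl n π) x (2 * q - 1)) := by
  by_cases hp : p = n + 1 <;> by_cases hq : q = n + 1
  · subst hp; subst hq
    simp [ExtendRight]
  · have hπq := h.1 q hq1 (by omega)
    subst hp
    have e2 : 2 * (n + 1) - 1 = 2 * n + 1 := by omega
    simp only [ExtendRight, e2, if_pos rfl,
      if_neg (show ¬ (2 * q - 1 = 2 * n + 1) by omega), if_neg (show ¬ (q = n + 1) from hq),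
      dbl_odd n π q hq1]
    split_ifs <;> omega
  · have hπp := h.1 p hp1 (by omega)
    subst hq
    have e2 : 2 * (n + 1) - 1 = 2 * n + 1 := by omega
    simp only [ExtendRight, e2, if_pos rfl,
      if_neg (show ¬ (2 * p - 1 = 2 * n + 1) by omega), if_neg (show ¬ (p = n + 1) from hp),
      dbl_odd n π p hp1]
    split_ifs <;> omega
  · have hπp := h.1 p hp1 (by omega)
    have hπq := h.1 q hq1 (by omega)
    simp only [ExtendRight,
      if_neg (show ¬ (2 * p - 1 = 2 * n + 1) by omega),
      if_neg (show ¬ (2 * q - 1 = 2 * n + 1) by omega),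
      if_neg (show ¬ (p = n + 1) from hp), if_neg (show ¬ (q = n + 1) from hq),
      dbl_odd n π p hp1, dbl_odd n π q hq1]
    split_ifs <;> omega

/-- If a `(k,l)`-crucial permutation of length `n` exists, then one of length `2*n`
exists. -/
theorem crucial_double (k l n : ℕ) (hk : 3 ≤ k) (hl : 3 ≤ l)
    (h : ∃ π : ℕ → ℕ, Crucial n k l π) :
    ∃ σ : ℕ → ℕ, Crucial (2 * n) k l σ := by
  obtain ⟨π, hper, hanti, hcru⟩ := h
  rcases Nat.eq_zero_or_pos n with hn | hn
  · subst hn; exact ⟨π, hper, hanti, hcru⟩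
  refine ⟨Dbl n π, dbl_perm hper, dbl_anti hk hl hper hanti, ?_⟩
  intro x hx1 hx2 hAM
  set y := min x (n + 1) with hy
  refine hcru y (by omega) (by omega) ⟨?_, ?_⟩
  · rintro ⟨i, d, hi, hd, hb, hm⟩
    refine hAM.1 ⟨2 * i - 1, 2 * d, by omega, by omega, ?_, ?_⟩
    · have : (k - 1) * (2 * d) = 2 * ((k - 1) * d) := by ring
      omega
    · intro j hj
      have H := hm j hj
      have hjb : i + j * d ≤ n + 1 := by
        have : j * d ≤ (k - 1) * d := Nat.mul_le_mul_right d (by omega)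
        omega
      have hjb' : i + (j + 1) * d ≤ n + 1 := by
        have : (j + 1) * d ≤ (k - 1) * d := Nat.mul_le_mul_right d (by omega)
        omega
      have e1 : 2 * i - 1 + j * (2 * d) = 2 * (i + j * d) - 1 := by
        have : j * (2 * d) = 2 * (j * d) := by ring
        omega
      have e2 : 2 * i - 1 + (j + 1) * (2 * d) = 2 * (i + (j + 1) * d) - 1 := by
        have : (j + 1) * (2 * d) = 2 * ((j + 1) * d) := by ring
        omega
      rw [e1, e2]
      exact (dbl_cmp hper hn x hx1 hx2 (i + j * d) (by omega) hjb
        (i + (j + 1) * d) (by omega) hjb').mp H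
  · rintro ⟨i, d, hi, hd, hb, hm⟩
    refine hAM.2 ⟨2 * i - 1, 2 * d, by omega, by omega, ?_, ?_⟩
    · have : (l - 1) * (2 * d) = 2 * ((l - 1) * d) := by ring
      omega
    · intro j hj
      have H := hm j hj
      have hjb : i + j * d ≤ n + 1 := by
        have : j * d ≤ (l - 1) * d := Nat.mul_le_mul_right d (by omega)
        omega
      have hjb' : i + (j + 1) * d ≤ n + 1 := by
        have : (j + 1) * d ≤ (l - 1) * d := Nat.mul_le_mul_right d (by omega)
        omega
      have e1 : 2 * i - 1 + j * (2 * d) = 2 * (i + j * d) - 1 := by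
        have : j * (2 * d) = 2 * (j * d) := by ring
        omega
      have e2 : 2 * i - 1 + (j + 1) * (2 * d) = 2 * (i + (j + 1) * d) - 1 := by
        have : (j + 1) * (2 * d) = 2 * ((j + 1) * d) := by ring
        omega
      rw [e1, e2]
      exact (dbl_cmp hper hn x hx1 hx2 (i + (j + 1) * d) (by omega) hjb'
        (i + j * d) (by omega) hjb).mp H
end

section
/- For all integers k, ℓ ≥ 3: if there exists a (k,ℓ)-crucial permutation of length n, then there exists a (k,ℓ)-crucial permutation of length 2n+1. -/
section Aux

variable {k l a b : ℕ}

lemma interleave_perm (a b : ℕ) (hba : b ≤ a) (hab : a ≤ b + 1)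
    (α β γ : ℕ → ℕ)
    (hγo : ∀ t, γ (2*t+1) = α (t+1))
    (hγe : ∀ t, 1 ≤ t → γ (2*t) = a + β t)
    (hα : IsPermutation a α) (hβ : IsPermutation b β) :
    IsPermutation (a + b) γ := by
  obtain ⟨hα1, hα2, hα3⟩ := hα
  obtain ⟨hβ1, hβ2, hβ3⟩ := hβ
  have go : ∀ p, p % 2 = 1 → γ p = α ((p+1)/2) := by
    intro p hp
    have h1 : p = 2*((p+1)/2 - 1)+1 := by omega
    have h2 := hγo ((p+1)/2 - 1)
    rw [← h1] at h2
    rw [h2]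
    congr 1
    omega
  have ge : ∀ p, p % 2 = 0 → 1 ≤ p → γ p = a + β (p/2) := by
    intro p hp hp1
    have h1 : p = 2*(p/2) := by omega
    have h2 := hγe (p/2) (by omega)
    rw [← h1] at h2
    exact h2
  refine ⟨?_, ?_, ?_⟩
  · intro i h1 h2
    by_cases hi2 : i % 2 = 1
    · rw [go i hi2]
      have := hα1 ((i+1)/2) (by omega) (by omega)
      omega
    · have hi0 : i % 2 = 0 := by omega
      rw [ge i hi0 h1]
      have := hβ1 (i/2) (by omega) (by omega)
      omega
  · intro i j hi1 hi2 hj1 hj2 heq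
    by_cases hio : i % 2 = 1 <;> by_cases hjo : j % 2 = 1
    · rw [go i hio, go j hjo] at heq
      have := hα2 _ _ (by omega) (by omega) (by omega) (by omega) heq
      omega
    · rw [go i hio, ge j (by omega) hj1] at heq
      have h1 := hα1 ((i+1)/2) (by omega) (by omega)
      have h2 := hβ1 (j/2) (by omega) (by omega)
      omega
    · rw [ge i (by omega) hi1, go j hjo] at heq
      have h1 := hα1 ((j+1)/2) (by omega) (by omega)
      have h2 := hβ1 (i/2) (by omega) (by omega)
      omega
    · rw [ge i (by omega) hi1, ge j (by omega) hj1] at heq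
      have := hβ2 _ _ (show 1 ≤ i/2 by omega) (show i/2 ≤ b by omega)
        (show 1 ≤ j/2 by omega) (show j/2 ≤ b by omega) (by omega)
      omega
  · intro v hv1 hv2
    by_cases hva : v ≤ a
    · obtain ⟨t, ht1, ht2, ht3⟩ := hα3 v hv1 hva
      refine ⟨2*(t-1)+1, by omega, by omega, ?_⟩
      rw [hγo (t-1), show t - 1 + 1 = t from by omega]
      exact ht3
    · obtain ⟨t, ht1, ht2, ht3⟩ := hβ3 (v - a) (by omega) (by omega)
      refine ⟨2*t, by omega, by omega, ?_⟩
      rw [hγe t ht1, ht3]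
      omega

lemma interleave_anti (k l a b : ℕ) (hk : 3 ≤ k) (hl : 3 ≤ l)
    (hba : b ≤ a) (hab : a ≤ b + 1)
    (α β γ : ℕ → ℕ)
    (hγo : ∀ t, γ (2*t+1) = α (t+1))
    (hγe : ∀ t, 1 ≤ t → γ (2*t) = a + β t)
    (hαp : IsPermutation a α) (hβp : IsPermutation b β)
    (hα : AntiMonotone a k l α) (hβ : AntiMonotone b k l β) :
    AntiMonotone (a + b) k l γ := by
  have go : ∀ p, p % 2 = 1 → γ p = α ((p+1)/2) := by
    intro p hp
    have h1 : p = 2*((p+1)/2 - 1)+1 := by omega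
    have h2 := hγo ((p+1)/2 - 1)
    rw [← h1] at h2
    rw [h2]
    congr 1
    omega
  have small : ∀ p, p % 2 = 1 → p ≤ a + b → γ p ≤ a := by
    intro p h1 h2
    rw [go p h1]
    exact (hαp.1 ((p+1)/2) (by omega) (by omega)).2
  have large : ∀ p, p % 2 = 0 → 1 ≤ p → p ≤ a + b → a + 1 ≤ γ p := by
    intro p h1 h2 h3
    have hp : p = 2*(p/2) := by omega
    have h4 := hγe (p/2) (by omega)
    rw [← hp] at h4
    rw [h4]
    have := hβp.1 (p/2) (by omega) (by omega)
    omega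
  constructor
  · rintro ⟨i, d, hi, hd, hb, hm⟩
    by_cases hde : d % 2 = 0
    · obtain ⟨e, rfl⟩ : ∃ e, d = 2*e := ⟨d/2, by omega⟩
      have he : 1 ≤ e := by omega
      have hmulk : (k-1) * (2*e) = 2*((k-1)*e) := by ring
      rw [hmulk] at hb
      by_cases hio : i % 2 = 1
      · obtain ⟨c, rfl⟩ : ∃ c, i = 2*c+1 := ⟨i/2, by omega⟩
        refine hα.1 ⟨c+1, e, by omega, he, by omega, ?_⟩
        intro j hj
        have h := hm j hj
        have e1 : ∀ jj : ℕ, 2*c+1 + jj*(2*e) = 2*(c + jj*e) + 1 := fun jj => by ring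
        rw [e1 j, e1 (j+1), hγo, hγo] at h
        rw [show c + 1 + j*e = c + j*e + 1 from by omega,
            show c + 1 + (j+1)*e = c + (j+1)*e + 1 from by omega]
        exact h
      · obtain ⟨c, rfl⟩ : ∃ c, i = 2*c := ⟨i/2, by omega⟩
        have hc : 1 ≤ c := by omega
        refine hβ.1 ⟨c, e, hc, he, by omega, ?_⟩
        intro j hj
        have h := hm j hj
        have e1 : ∀ jj : ℕ, 2*c + jj*(2*e) = 2*(c + jj*e) := fun jj => by ring
        rw [e1 j, e1 (j+1), hγe _ (by omega), hγe _ (by omega)] at h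
        omega
    · have h0 := hm 0 (by omega)
      have h1 := hm 1 (by omega)
      rw [show i + 0*d = i from by ring, show i + 1*d = i + d from by ring] at h0
      rw [show i + 1*d = i + d from by ring, show i + (1+1)*d = i + 2*d from by ring] at h1
      have hd2 : 2*d ≤ (k-1)*d := Nat.mul_le_mul_right d (by omega)
      have hik : i + 2*d ≤ a + b := by omega
      by_cases hio : i % 2 = 1
      · have l1 := large (i+d) (by omega) (by omega) (by omega)
        have s2 := small (i + 2*d) (by omega) hik
        omega
      · have l1 := large i (by omega) hi (by omega)
        have s1 := small (i+d) (by omega) (by omega)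
        omega
  · rintro ⟨i, d, hi, hd, hb, hm⟩
    by_cases hde : d % 2 = 0
    · obtain ⟨e, rfl⟩ : ∃ e, d = 2*e := ⟨d/2, by omega⟩
      have he : 1 ≤ e := by omega
      have hmulk : (l-1) * (2*e) = 2*((l-1)*e) := by ring
      rw [hmulk] at hb
      by_cases hio : i % 2 = 1
      · obtain ⟨c, rfl⟩ : ∃ c, i = 2*c+1 := ⟨i/2, by omega⟩
        refine hα.2 ⟨c+1, e, by omega, he, by omega, ?_⟩
        intro j hj
        have h := hm j hj
        have e1 : ∀ jj : ℕ, 2*c+1 + jj*(2*e) = 2*(c + jj*e) + 1 := fun jj => by ring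
        rw [e1 j, e1 (j+1), hγo, hγo] at h
        rw [show c + 1 + j*e = c + j*e + 1 from by omega,
            show c + 1 + (j+1)*e = c + (j+1)*e + 1 from by omega]
        exact h
      · obtain ⟨c, rfl⟩ : ∃ c, i = 2*c := ⟨i/2, by omega⟩
        have hc : 1 ≤ c := by omega
        refine hβ.2 ⟨c, e, hc, he, by omega, ?_⟩
        intro j hj
        have h := hm j hj
        have e1 : ∀ jj : ℕ, 2*c + jj*(2*e) = 2*(c + jj*e) := fun jj => by ring
        rw [e1 j, e1 (j+1), hγe _ (by omega), hγe _ (by omega)] at h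
        omega
    · have h0 := hm 0 (by omega)
      have h1 := hm 1 (by omega)
      rw [show i + 0*d = i from by ring, show i + 1*d = i + d from by ring] at h0
      rw [show i + 1*d = i + d from by ring, show i + (1+1)*d = i + 2*d from by ring] at h1
      have hd2 : 2*d ≤ (l-1)*d := Nat.mul_le_mul_right d (by omega)
      have hik : i + 2*d ≤ a + b := by omega
      by_cases hio : i % 2 = 1
      · have s1 := small i hio (by omega)
        have l1 := large (i+d) (by omega) (by omega) (by omega)
        omega
      · have l1 := large (i + 2*d) (by omega) (by omega) hik
        have s1 := small (i+d) (by omega) (by omega)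
        omega

lemma exists_antimono (k l : ℕ) (hk : 3 ≤ k) (hl : 3 ≤ l) :
    ∀ m : ℕ, ∃ τ : ℕ → ℕ, IsPermutation m τ ∧ AntiMonotone m k l τ := by
  intro m
  induction m using Nat.strong_induction_on with
  | _ m ih =>
  by_cases hm : m ≤ 1
  · refine ⟨id, ⟨?_, ?_, ?_⟩, ?_, ?_⟩
    · intro i h1 h2; exact ⟨h1, h2⟩
    · intro i j _ _ _ _ h; exact h
    · intro v h1 h2; exact ⟨v, h1, h2, rfl⟩
    · rintro ⟨i, d, hi, hd, hb, -⟩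
      have : 2*d ≤ (k-1)*d := Nat.mul_le_mul_right d (by omega)
      omega
    · rintro ⟨i, d, hi, hd, hb, -⟩
      have : 2*d ≤ (l-1)*d := Nat.mul_le_mul_right d (by omega)
      omega
  · obtain ⟨τa, hpa, haa⟩ := ih ((m+1)/2) (by omega)
    obtain ⟨τb, hpb, hab'⟩ := ih (m/2) (by omega)
    set a := (m+1)/2 with ha
    set b := m/2 with hbdef
    set γ : ℕ → ℕ := fun j => if j % 2 = 1 then τa ((j+1)/2) else a + τb (j/2) with hγ
    have hγo : ∀ t, γ (2*t+1) = τa (t+1) := by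
      intro t
      simp only [hγ]
      rw [if_pos (by omega)]
      congr 1
      omega
    have hγe : ∀ t, 1 ≤ t → γ (2*t) = a + τb t := by
      intro t ht
      simp only [hγ]
      rw [if_neg (by omega), show 2*t/2 = t from by omega]
    refine ⟨γ, ?_, ?_⟩
    · have h := interleave_perm a b (by omega) (by omega) τa τb γ hγo hγe hpa hpb
      rwa [show a + b = m from by omega] at h
    · have h := interleave_anti k l a b hk hl (by omega) (by omega) τa τb γ hγo hγe hpa hpb haa hab'
      rwa [show a + b = m from by omega] at h

end Aux

/-- If a `(k,l)`-crucial permutation of length `n` exists, then one of length `2*n+1`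
exists. -/
theorem crucial_double_plus_one (k l n : ℕ) (hk : 3 ≤ k) (hl : 3 ≤ l)
    (h : ∃ π : ℕ → ℕ, Crucial n k l π) :
    ∃ σ : ℕ → ℕ, Crucial (2 * n + 1) k l σ := by
  obtain ⟨π, hπperm, hπanti, hπcruc⟩ := h
  obtain ⟨τ, hτperm, hτanti⟩ := exists_antimono k l hk hl (n+1)
  set σ : ℕ → ℕ := fun j => if j % 2 = 1 then τ ((j+1)/2) else (n+1) + π (j/2) with hσdef
  have hσo : ∀ t, σ (2*t+1) = τ (t+1) := by
    intro t
    simp only [hσdef]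
    rw [if_pos (by omega), show (2*t+1+1)/2 = t + 1 from by omega]
  have hσe : ∀ t, 1 ≤ t → σ (2*t) = (n+1) + π t := by
    intro t ht
    simp only [hσdef]
    rw [if_neg (by omega), show 2*t/2 = t from by omega]
  refine ⟨σ, ?_, ?_, ?_⟩
  · have h1 := interleave_perm (n+1) n (by omega) (by omega) τ π σ hσo hσe hτperm hπperm
    rwa [show n+1+n = 2*n+1 from by omega] at h1
  · have h1 := interleave_anti k l (n+1) n hk hl (by omega) (by omega) τ π σ hσo hσe
      hτperm hπperm hτanti hπanti
    rwa [show n+1+n = 2*n+1 from by omega] at h1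
  · intro x hx1 hx2 hAM
    set y : ℕ := if x ≤ n+1 then 1 else x - (n+1) with hydef
    have hyx : (x ≤ n+1 ∧ y = 1) ∨ (n+2 ≤ x ∧ x = y + (n+1)) := by
      rcases le_or_gt x (n+1) with hc | hc
      · left; exact ⟨hc, by rw [hydef, if_pos hc]⟩
      · right
        refine ⟨by omega, ?_⟩
        rw [hydef, if_neg (by omega)]
        omega
    have hy1 : 1 ≤ y := by rcases hyx with ⟨h1, h2⟩ | ⟨h1, h2⟩ <;> omega
    have hy2 : y ≤ n+1 := by rcases hyx with ⟨h1, h2⟩ | ⟨h1, h2⟩ <;> omega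
    have hπv := hπperm.1
    have Flast : ExtendRight n π y (n+1) = y := by
      unfold ExtendRight
      rw [if_pos rfl]
    have Fval : ∀ t, 1 ≤ t → t ≤ n →
        ExtendRight n π y t = if y ≤ π t then π t + 1 else π t := by
      intro t h1 h2
      unfold ExtendRight
      rw [if_neg (by omega)]
    have Elast : ExtendRight (2*n+1) σ x (2*(n+1)) = x := by
      unfold ExtendRight
      rw [if_pos (by omega)]
    have Eval : ∀ t, 1 ≤ t → t ≤ n → ExtendRight (2*n+1) σ x (2*t) =
        (if x ≤ (n+1) + π t then (n+1) + π t + 1 else (n+1) + π t) := by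
      intro t h1 h2
      unfold ExtendRight
      rw [if_neg (by omega), hσe t h1]
    have key : ∀ p q, 1 ≤ p → p ≤ n+1 → 1 ≤ q → q ≤ n+1 →
        ExtendRight n π y p < ExtendRight n π y q →
        ExtendRight (2*n+1) σ x (2*p) < ExtendRight (2*n+1) σ x (2*q) := by
      intro p q hp1 hp2 hq1 hq2 hlt
      rcases Nat.lt_or_ge p (n+1) with hpn | hpn
      · have hpn' : p ≤ n := by omega
        have hπp := hπv p hp1 hpn'
        rw [Fval p hp1 hpn'] at hlt
        rw [Eval p hp1 hpn']
        rcases Nat.lt_or_ge q (n+1) with hqn | hqn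
        · have hqn' : q ≤ n := by omega
          have hπq := hπv q hq1 hqn'
          rw [Fval q hq1 hqn'] at hlt
          rw [Eval q hq1 hqn']
          rcases hyx with ⟨h1, h2⟩ | ⟨h1, h2⟩ <;> split_ifs at hlt ⊢ <;> omega
        · have hq' : q = n+1 := by omega
          subst hq'
          rw [Flast] at hlt
          rw [Elast]
          rcases hyx with ⟨h1, h2⟩ | ⟨h1, h2⟩ <;> split_ifs at hlt ⊢ <;> omega
      · have hp' : p = n+1 := by omega
        subst hp'
        rw [Flast] at hlt
        rw [Elast]
        rcases Nat.lt_or_ge q (n+1) with hqn | hqn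
        · have hqn' : q ≤ n := by omega
          have hπq := hπv q hq1 hqn'
          rw [Fval q hq1 hqn'] at hlt
          rw [Eval q hq1 hqn']
          rcases hyx with ⟨h1, h2⟩ | ⟨h1, h2⟩ <;> split_ifs at hlt ⊢ <;> omega
        · have hq' : q = n+1 := by omega
          subst hq'
          rw [Flast] at hlt
          exact absurd hlt (lt_irrefl _)
    have hbad := hπcruc y hy1 hy2
    obtain ⟨hAMi, hAMd⟩ := hAM
    rcases not_and_or.mp hbad with hA | hB
    · rw [not_not] at hA
      obtain ⟨i, d, hi, hd, hb, hm⟩ := hA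
      refine hAMi ⟨2*i, 2*d, by omega, by omega, ?_, ?_⟩
      · rw [show (k-1)*(2*d) = 2*((k-1)*d) from by ring]
        omega
      · intro j hj
        have hjk : j*d ≤ (k-1)*d := Nat.mul_le_mul_right d (by omega)
        have hjk2 : (j+1)*d ≤ (k-1)*d := Nat.mul_le_mul_right d (by omega)
        rw [show 2*i + j*(2*d) = 2*(i + j*d) from by ring,
            show 2*i + (j+1)*(2*d) = 2*(i + (j+1)*d) from by ring]
        exact key _ _ (by omega) (by omega) (by omega) (by omega) (hm j hj)
    · rw [not_not] at hB
      obtain ⟨i, d, hi, hd, hb, hm⟩ := hB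
      refine hAMd ⟨2*i, 2*d, by omega, by omega, ?_, ?_⟩
      · rw [show (l-1)*(2*d) = 2*((l-1)*d) from by ring]
        omega
      · intro j hj
        have hjk : j*d ≤ (l-1)*d := Nat.mul_le_mul_right d (by omega)
        have hjk2 : (j+1)*d ≤ (l-1)*d := Nat.mul_le_mul_right d (by omega)
        rw [show 2*i + j*(2*d) = 2*(i + j*d) from by ring,
            show 2*i + (j+1)*(2*d) = 2*(i + (j+1)*d) from by ring]
        exact key _ _ (by omega) (by omega) (by omega) (by omega) (hm j hj)
end

section
/- For all integers k, ℓ ≥ 3: if there exists a (k,ℓ)-crucial permutation of length n, then there exists a (k,ℓ)-bicrucial permutation of length 2n. -/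

lemma ite1 (z u v : ℕ) : u < v ↔ (if z ≤ u then u+1 else u) < (if z ≤ v then v+1 else v) := by
  split_ifs <;> omega

lemma anti_small {m k l : ℕ} (hk : 2 ≤ k) (hl : 2 ≤ l) (hm : m ≤ 1) (f : ℕ → ℕ) :
    AntiMonotone m k l f := by
  constructor
  · rintro ⟨i, d, hi, hd, hr, -⟩
    have : k - 1 ≤ (k-1) * d := Nat.le_mul_of_pos_right _ (by omega)
    omega
  · rintro ⟨i, d, hi, hd, hr, -⟩
    have : l - 1 ≤ (l-1) * d := Nat.le_mul_of_pos_right _ (by omega)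
    omega

lemma restrict_inc (n k z : ℕ) (π : ℕ → ℕ) (i d : ℕ) (hi : 1 ≤ i) (hd : 1 ≤ d)
    (hr : i + (k-1)*d ≤ n)
    (hm : ∀ j, j + 1 < k → ExtendRight n π z (i + j*d) < ExtendRight n π z (i + (j+1)*d)) :
    HasArithInc n k π := by
  refine ⟨i, d, hi, hd, hr, fun j hj => ?_⟩
  have hb1 : j*d ≤ (k-1)*d := Nat.mul_le_mul (by omega) (le_refl d)
  have hb2 : (j+1)*d ≤ (k-1)*d := Nat.mul_le_mul (by omega) (le_refl d)
  have h := hm j hj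
  simp only [ExtendRight, if_neg (show i + j*d ≠ n+1 by omega),
    if_neg (show i + (j+1)*d ≠ n+1 by omega)] at h
  exact (ite1 z _ _).mpr h

lemma restrict_dec (n l z : ℕ) (π : ℕ → ℕ) (i d : ℕ) (hi : 1 ≤ i) (hd : 1 ≤ d)
    (hr : i + (l-1)*d ≤ n)
    (hm : ∀ j, j + 1 < l → ExtendRight n π z (i + j*d) > ExtendRight n π z (i + (j+1)*d)) :
    HasArithDec n l π := by
  refine ⟨i, d, hi, hd, hr, fun j hj => ?_⟩
  have hb1 : j*d ≤ (l-1)*d := Nat.mul_le_mul (by omega) (le_refl d)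
  have hb2 : (j+1)*d ≤ (l-1)*d := Nat.mul_le_mul (by omega) (le_refl d)
  have h := hm j hj
  simp only [ExtendRight, if_neg (show i + j*d ≠ n+1 by omega),
    if_neg (show i + (j+1)*d ≠ n+1 by omega)] at h
  exact (ite1 z _ _).mpr h

def sigma' (n : ℕ) (π : ℕ → ℕ) : ℕ → ℕ :=
  fun i => if i % 2 = 1 then n + π ((i+1)/2) else n + 1 - π (n + 1 - i/2)

lemma sigma'_odd (n : ℕ) (π : ℕ → ℕ) (j : ℕ) (hj : 1 ≤ j) :
    sigma' n π (2*j - 1) = n + π j := by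
  have h : (2*j-1+1)/2 = j := by omega
  simp only [sigma', if_pos (show (2*j-1) % 2 = 1 by omega), h]

lemma sigma'_even (n : ℕ) (π : ℕ → ℕ) (j : ℕ) :
    sigma' n π (2*j) = n + 1 - π (n + 1 - j) := by
  have h : (2*j)/2 = j := by omega
  simp only [sigma', if_neg (show ¬ (2*j) % 2 = 1 by omega), h]

/-- If a `(k,l)`-crucial permutation of length `n` exists, then a `(k,l)`-bicrucial
permutation of length `2*n` exists. -/
theorem bicrucial_from_crucial (k l n : ℕ) (hk : 3 ≤ k) (hl : 3 ≤ l)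
    (h : ∃ π : ℕ → ℕ, Crucial n k l π) :
    ∃ σ : ℕ → ℕ, Bicrucial (2 * n) k l σ := by
  obtain ⟨π, hperm, hanti, hcru⟩ := h
  rcases Nat.eq_zero_or_pos n with hn | hn
  · subst hn
    exact absurd (anti_small (by omega) (by omega) (le_refl 1) _)
      (hcru 1 (le_refl 1) (by omega))
  obtain ⟨hbnd, hinj, hsurj⟩ := hperm
  obtain ⟨hnoinc, hnodec⟩ := hanti
  set σ := sigma' n π with hσdef
  have hso : ∀ j, 1 ≤ j → σ (2*j-1) = n + π j := fun j hj => sigma'_odd n π j hj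
  have hse : ∀ j, σ (2*j) = n + 1 - π (n+1-j) := fun j => sigma'_even n π j
  have hob : ∀ j, 1 ≤ j → j ≤ n → n+1 ≤ σ (2*j-1) ∧ σ (2*j-1) ≤ 2*n := by
    intro j h1 h2; rw [hso j h1]; have := hbnd j h1 h2; omega
  have heb : ∀ j, 1 ≤ j → j ≤ n → 1 ≤ σ (2*j) ∧ σ (2*j) ≤ n := by
    intro j h1 h2; rw [hse j]; have := hbnd (n+1-j) (by omega) (by omega); omega
  have hsplit : ∀ i, 1 ≤ i → i ≤ 2*n →
      (∃ j, 1 ≤ j ∧ j ≤ n ∧ i = 2*j-1) ∨ (∃ j, 1 ≤ j ∧ j ≤ n ∧ i = 2*j) := by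
    intro i h1 h2
    by_cases hp : i % 2 = 1
    · exact Or.inl ⟨(i+1)/2, by omega, by omega, by omega⟩
    · exact Or.inr ⟨i/2, by omega, by omega, by omega⟩
  have hperm' : IsPermutation (2*n) σ := by
    refine ⟨?_, ?_, ?_⟩
    · intro i h1 h2
      rcases hsplit i h1 h2 with ⟨j, hj1, hj2, rfl⟩ | ⟨j, hj1, hj2, rfl⟩
      · have := hob j hj1 hj2; omega
      · have := heb j hj1 hj2; omega
    · intro i j hi1 hi2 hj1 hj2 heq
      rcases hsplit i hi1 hi2 with ⟨a, ha1, ha2, rfl⟩ | ⟨a, ha1, ha2, rfl⟩ <;>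
        rcases hsplit j hj1 hj2 with ⟨b, hb1, hb2, rfl⟩ | ⟨b, hb1, hb2, rfl⟩
      · rw [hso a ha1, hso b hb1] at heq
        have := hinj a b ha1 ha2 hb1 hb2 (by omega)
        omega
      · have h1 := hob a ha1 ha2; have h2 := heb b hb1 hb2; omega
      · have h1 := heb a ha1 ha2; have h2 := hob b hb1 hb2; omega
      · rw [hse a, hse b] at heq
        have c1 := hbnd (n+1-a) (by omega) (by omega)
        have c2 := hbnd (n+1-b) (by omega) (by omega)
        have := hinj (n+1-a) (n+1-b) (by omega) (by omega) (by omega) (by omega) (by omega)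
        omega
    · intro v h1 h2
      by_cases hv : n+1 ≤ v
      · obtain ⟨i, hi1, hi2, hiv⟩ := hsurj (v-n) (by omega) (by omega)
        refine ⟨2*i-1, by omega, by omega, ?_⟩
        rw [hso i hi1, hiv]; omega
      · obtain ⟨i, hi1, hi2, hiv⟩ := hsurj (n+1-v) (by omega) (by omega)
        refine ⟨2*(n+1-i), by omega, by omega, ?_⟩
        rw [hse (n+1-i), show n+1-(n+1-i) = i by omega, hiv]
        omega
  -- anti-monotonicity of σ
  have hAM : AntiMonotone (2*n) k l σ := by
    constructor
    · rintro ⟨i, d, hi, hd, hr, hm⟩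
      have hk2 : 2*d ≤ (k-1)*d := Nat.mul_le_mul (by omega) (le_refl d)
      by_cases hde : d % 2 = 0
      · -- even difference
        obtain ⟨e, rfl⟩ : ∃ e, d = 2*e := ⟨d/2, by omega⟩
        have he : 1 ≤ e := by omega
        by_cases hip : i % 2 = 1
        · -- odd start: increasing pattern in π
          obtain ⟨a, rfl⟩ : ∃ a, i = 2*a-1 := ⟨(i+1)/2, by omega⟩
          have ha : 1 ≤ a := by omega
          refine hnoinc ⟨a, e, ha, he, ?_, ?_⟩
          · have : (k-1)*(2*e) = 2*((k-1)*e) := by ring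
            omega
          · intro j hj
            have hmj := hm j hj
            have e1 : j*(2*e) = 2*(j*e) := by ring
            have e2 : (j+1)*(2*e) = 2*((j+1)*e) := by ring
            rw [show 2*a-1 + j*(2*e) = 2*(a+j*e)-1 by omega,
              show 2*a-1 + (j+1)*(2*e) = 2*(a+(j+1)*e)-1 by omega,
              hso (a+j*e) (by omega), hso (a+(j+1)*e) (by omega)] at hmj
            omega
        · -- even start: reversed increasing pattern in π
          obtain ⟨a, rfl⟩ : ∃ a, i = 2*a := ⟨i/2, by omega⟩
          have ha : 1 ≤ a := by omega
          have hkr : (k-1)*(2*e) = 2*((k-1)*e) := by ring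
          refine hnoinc ⟨n+1-a-(k-1)*e, e, by omega, he, by omega, ?_⟩
          intro j hj
          set j₂ := k-2-j with hj₂
          have hmj := hm j₂ (by omega)
          have e1 : j₂*(2*e) = 2*(j₂*e) := by ring
          have e2 : (j₂+1)*(2*e) = 2*((j₂+1)*e) := by ring
          have a1 : j₂*e + (j+1)*e = (k-1)*e := by
            rw [← Nat.add_mul, show j₂ + (j+1) = k-1 by omega]
          have a2 : (j₂+1)*e = j₂*e + e := by ring
          have a3 : (j+1)*e = j*e + e := by ring
          rw [show 2*a + j₂*(2*e) = 2*(a+j₂*e) by omega,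
            show 2*a + (j₂+1)*(2*e) = 2*(a+(j₂+1)*e) by omega,
            hse (a+j₂*e), hse (a+(j₂+1)*e)] at hmj
          have c1 := hbnd (n+1-(a+j₂*e)) (by omega) (by omega)
          have c2 := hbnd (n+1-(a+(j₂+1)*e)) (by omega) (by omega)
          rw [show n+1-a-(k-1)*e + j*e = n+1-(a+(j₂+1)*e) by omega,
            show n+1-a-(k-1)*e + (j+1)*e = n+1-(a+j₂*e) by omega]
          omega
      · -- odd difference
        by_cases hip : i % 2 = 1
        · obtain ⟨a, rfl⟩ : ∃ a, i = 2*a-1 := ⟨(i+1)/2, by omega⟩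
          have hmj := hm 0 (by omega)
          have h1 := hob a (by omega) (by omega)
          rw [show 2*a-1 + 0*d = 2*a-1 by omega,
            show 2*a-1 + (0+1)*d = 2*((2*a-1+d)/2) by omega] at hmj
          have h2 := heb ((2*a-1+d)/2) (by omega) (by omega)
          omega
        · obtain ⟨a, rfl⟩ : ∃ a, i = 2*a := ⟨i/2, by omega⟩
          have hmj := hm 1 (by omega)
          rw [show 2*a + 1*d = 2*((2*a+d+1)/2)-1 by omega,
            show 2*a + (1+1)*d = 2*((2*a+2*d)/2) by omega] at hmj
          have h1 := hob ((2*a+d+1)/2) (by omega) (by omega)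
          have h2 := heb ((2*a+2*d)/2) (by omega) (by omega)
          omega
    · rintro ⟨i, d, hi, hd, hr, hm⟩
      have hk2 : 2*d ≤ (l-1)*d := Nat.mul_le_mul (by omega) (le_refl d)
      by_cases hde : d % 2 = 0
      · obtain ⟨e, rfl⟩ : ∃ e, d = 2*e := ⟨d/2, by omega⟩
        have he : 1 ≤ e := by omega
        by_cases hip : i % 2 = 1
        · obtain ⟨a, rfl⟩ : ∃ a, i = 2*a-1 := ⟨(i+1)/2, by omega⟩
          have ha : 1 ≤ a := by omega
          refine hnodec ⟨a, e, ha, he, ?_, ?_⟩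
          · have : (l-1)*(2*e) = 2*((l-1)*e) := by ring
            omega
          · intro j hj
            have hmj := hm j hj
            have e1 : j*(2*e) = 2*(j*e) := by ring
            have e2 : (j+1)*(2*e) = 2*((j+1)*e) := by ring
            rw [show 2*a-1 + j*(2*e) = 2*(a+j*e)-1 by omega,
              show 2*a-1 + (j+1)*(2*e) = 2*(a+(j+1)*e)-1 by omega,
              hso (a+j*e) (by omega), hso (a+(j+1)*e) (by omega)] at hmj
            omega
        · obtain ⟨a, rfl⟩ : ∃ a, i = 2*a := ⟨i/2, by omega⟩
          have ha : 1 ≤ a := by omega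
          have hkr : (l-1)*(2*e) = 2*((l-1)*e) := by ring
          refine hnodec ⟨n+1-a-(l-1)*e, e, by omega, he, by omega, ?_⟩
          intro j hj
          set j₂ := l-2-j with hj₂
          have hmj := hm j₂ (by omega)
          have e1 : j₂*(2*e) = 2*(j₂*e) := by ring
          have e2 : (j₂+1)*(2*e) = 2*((j₂+1)*e) := by ring
          have a1 : j₂*e + (j+1)*e = (l-1)*e := by
            rw [← Nat.add_mul, show j₂ + (j+1) = l-1 by omega]
          have a2 : (j₂+1)*e = j₂*e + e := by ring
          have a3 : (j+1)*e = j*e + e := by ring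
          rw [show 2*a + j₂*(2*e) = 2*(a+j₂*e) by omega,
            show 2*a + (j₂+1)*(2*e) = 2*(a+(j₂+1)*e) by omega,
            hse (a+j₂*e), hse (a+(j₂+1)*e)] at hmj
          have c1 := hbnd (n+1-(a+j₂*e)) (by omega) (by omega)
          have c2 := hbnd (n+1-(a+(j₂+1)*e)) (by omega) (by omega)
          rw [show n+1-a-(l-1)*e + j*e = n+1-(a+(j₂+1)*e) by omega,
            show n+1-a-(l-1)*e + (j+1)*e = n+1-(a+j₂*e) by omega]
          omega
      · by_cases hip : i % 2 = 1
        · obtain ⟨a, rfl⟩ : ∃ a, i = 2*a-1 := ⟨(i+1)/2, by omega⟩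
          have hmj := hm 1 (by omega)
          rw [show 2*a-1 + 1*d = 2*((2*a-1+d)/2) by omega,
            show 2*a-1 + (1+1)*d = 2*((2*a-1+2*d+1)/2)-1 by omega] at hmj
          have h1 := heb ((2*a-1+d)/2) (by omega) (by omega)
          have h2 := hob ((2*a-1+2*d+1)/2) (by omega) (by omega)
          omega
        · obtain ⟨a, rfl⟩ : ∃ a, i = 2*a := ⟨i/2, by omega⟩
          have hmj := hm 0 (by omega)
          rw [show 2*a + 0*d = 2*a by omega,
            show 2*a + (0+1)*d = 2*((2*a+d+1)/2)-1 by omega] at hmj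
          have h1 := heb a (by omega) (by omega)
          have h2 := hob ((2*a+d+1)/2) (by omega) (by omega)
          omega
  refine ⟨σ, ⟨⟨hperm', hAM, ?_⟩, ?_⟩⟩
  · -- right cruciality
    intro x hx1 hx2 hAM'
    set y := if n+1 ≤ x then x - n else 1 with hy
    have hy1 : 1 ≤ y := by rw [hy]; split_ifs <;> omega
    have hy2 : y ≤ n+1 := by rw [hy]; split_ifs <;> omega
    have hyx : ∀ v, 1 ≤ v → v ≤ n → (y ≤ v ↔ x ≤ n + v) := by
      intro v h1 h2; rw [hy]; split_ifs <;> omega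
    have hv1 : ∀ p, 1 ≤ p → p ≤ n →
        ExtendRight n π y p = (if y ≤ π p then π p + 1 else π p) := by
      intro p h1 h2; simp only [ExtendRight, if_neg (show p ≠ n+1 by omega)]
    have hv2 : ExtendRight n π y (n+1) = y := by simp [ExtendRight]
    have hw1 : ∀ p, 1 ≤ p → p ≤ n →
        ExtendRight (2*n) σ x (2*p-1) = (if x ≤ n + π p then n + π p + 1 else n + π p) := by
      intro p h1 h2
      simp only [ExtendRight, if_neg (show 2*p-1 ≠ 2*n+1 by omega), hso p h1]
    have hw2 : ExtendRight (2*n) σ x (2*(n+1)-1) = x := by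
      simp only [ExtendRight, if_pos (show 2*(n+1)-1 = 2*n+1 by omega)]
    have hcomp : ∀ p q, 1 ≤ p → p ≤ n+1 → 1 ≤ q → q ≤ n+1 →
        (ExtendRight n π y p < ExtendRight n π y q ↔
         ExtendRight (2*n) σ x (2*p-1) < ExtendRight (2*n) σ x (2*q-1)) := by
      intro p q hp1 hp2 hq1 hq2
      by_cases hpn : p = n+1 <;> by_cases hqn : q = n+1
      · subst hpn; subst hqn; omega
      · subst hpn
        rw [hv2, hw2, hv1 q hq1 (by omega), hw1 q hq1 (by omega)]
        have b1 := hbnd q hq1 (by omega)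
        have b2 := hyx (π q) (by omega) (by omega)
        split_ifs <;> omega
      · subst hqn
        rw [hv2, hw2, hv1 p hp1 (by omega), hw1 p hp1 (by omega)]
        have b1 := hbnd p hp1 (by omega)
        have b2 := hyx (π p) (by omega) (by omega)
        split_ifs <;> omega
      · rw [hv1 p hp1 (by omega), hw1 p hp1 (by omega),
          hv1 q hq1 (by omega), hw1 q hq1 (by omega)]
        have b1 := hbnd p hp1 (by omega)
        have b2 := hbnd q hq1 (by omega)
        have b3 := hyx (π p) (by omega) (by omega)
        have b4 := hyx (π q) (by omega) (by omega)
        split_ifs <;> omega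
    have hm' := hcru y hy1 hy2
    rw [AntiMonotone, not_and_or, not_not, not_not] at hm'
    rcases hm' with ⟨i, d, hi, hd, hr, hm⟩ | ⟨i, d, hi, hd, hr, hm⟩
    · refine hAM'.1 ⟨2*i-1, 2*d, by omega, by omega, ?_, ?_⟩
      · have : (k-1)*(2*d) = 2*((k-1)*d) := by ring
        omega
      · intro j hj
        have hb1 : j*d ≤ (k-1)*d := Nat.mul_le_mul (by omega) (le_refl d)
        have hb2 : (j+1)*d ≤ (k-1)*d := Nat.mul_le_mul (by omega) (le_refl d)
        have e1 : j*(2*d) = 2*(j*d) := by ring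
        have e2 : (j+1)*(2*d) = 2*((j+1)*d) := by ring
        rw [show 2*i-1 + j*(2*d) = 2*(i+j*d)-1 by omega,
          show 2*i-1 + (j+1)*(2*d) = 2*(i+(j+1)*d)-1 by omega]
        exact (hcomp (i+j*d) (i+(j+1)*d) (by omega) (by omega) (by omega) (by omega)).mp
          (hm j hj)
    · refine hAM'.2 ⟨2*i-1, 2*d, by omega, by omega, ?_, ?_⟩
      · have : (l-1)*(2*d) = 2*((l-1)*d) := by ring
        omega
      · intro j hj
        have hb1 : j*d ≤ (l-1)*d := Nat.mul_le_mul (by omega) (le_refl d)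
        have hb2 : (j+1)*d ≤ (l-1)*d := Nat.mul_le_mul (by omega) (le_refl d)
        have e1 : j*(2*d) = 2*(j*d) := by ring
        have e2 : (j+1)*(2*d) = 2*((j+1)*d) := by ring
        rw [show 2*i-1 + j*(2*d) = 2*(i+j*d)-1 by omega,
          show 2*i-1 + (j+1)*(2*d) = 2*(i+(j+1)*d)-1 by omega]
        exact (hcomp (i+(j+1)*d) (i+j*d) (by omega) (by omega) (by omega) (by omega)).mp
          (hm j hj)
  · -- left cruciality
    intro x hx1 hx2 hAM'
    set z := if x ≤ n then n+2-x else 1 with hz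
    have hz1 : 1 ≤ z := by rw [hz]; split_ifs <;> omega
    have hz2 : z ≤ n+1 := by rw [hz]; split_ifs <;> omega
    have hzval : (x ≤ n ∧ z = n+2-x) ∨ (n+1 ≤ x ∧ z = 1) := by
      rw [hz]; split_ifs with hc
      · exact Or.inl ⟨hc, rfl⟩
      · exact Or.inr ⟨by omega, rfl⟩
    have hv1 : ∀ p, 1 ≤ p → p ≤ n →
        ExtendRight n π z p = (if z ≤ π p then π p + 1 else π p) := by
      intro p h1 h2; simp only [ExtendRight, if_neg (show p ≠ n+1 by omega)]
    have hv2 : ExtendRight n π z (n+1) = z := by simp [ExtendRight]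
    have hw1 : ∀ p, 1 ≤ p → p ≤ n →
        ExtendLeft σ x (2*n+3-2*p) =
          (if x ≤ n+1-π p then (n+1-π p) + 1 else n+1-π p) := by
      intro p h1 h2
      simp only [ExtendLeft, if_neg (show ¬ (2*n+3-2*p = 1) by omega)]
      rw [show 2*n+3-2*p - 1 = 2*(n+1-p) by omega, hse (n+1-p),
        show n+1-(n+1-p) = p by omega]
    have hw2 : ExtendLeft σ x (2*n+3-2*(n+1)) = x := by
      simp only [ExtendLeft, if_pos (show 2*n+3-2*(n+1) = 1 by omega)]
    have hflip : ∀ p q, 1 ≤ p → p ≤ n+1 → 1 ≤ q → q ≤ n+1 →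
        (ExtendRight n π z p < ExtendRight n π z q ↔
         ExtendLeft σ x (2*n+3-2*q) < ExtendLeft σ x (2*n+3-2*p)) := by
      intro p q hp1 hp2 hq1 hq2
      by_cases hpn : p = n+1 <;> by_cases hqn : q = n+1
      · subst hpn; subst hqn; omega
      · subst hpn
        rw [hv2, hw2, hv1 q hq1 (by omega), hw1 q hq1 (by omega)]
        have b1 := hbnd q hq1 (by omega)
        split_ifs <;> omega
      · subst hqn
        rw [hv2, hw2, hv1 p hp1 (by omega), hw1 p hp1 (by omega)]
        have b1 := hbnd p hp1 (by omega)
        split_ifs <;> omega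
      · rw [hv1 p hp1 (by omega), hw1 p hp1 (by omega),
          hv1 q hq1 (by omega), hw1 q hq1 (by omega)]
        have b1 := hbnd p hp1 (by omega)
        have b2 := hbnd q hq1 (by omega)
        split_ifs <;> omega
    have hm' := hcru z hz1 hz2
    rw [AntiMonotone, not_and_or, not_not, not_not] at hm'
    rcases hm' with ⟨i, d, hi, hd, hr, hm⟩ | ⟨i, d, hi, hd, hr, hm⟩
    · have hend : i + (k-1)*d = n+1 := by
        by_contra hc
        exact hnoinc (restrict_inc n k z π i d hi hd (by omega) hm)
      refine hAM'.1 ⟨1, 2*d, le_refl 1, by omega, ?_, ?_⟩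
      · have : (k-1)*(2*d) = 2*((k-1)*d) := by ring
        omega
      · intro j' hj'
        set j := k-2-j' with hjd
        have a1 : j*d + (j'+1)*d = (k-1)*d := by
          rw [← Nat.add_mul, show j + (j'+1) = k-1 by omega]
        have a2 : (j+1)*d + j'*d = (k-1)*d := by
          rw [← Nat.add_mul, show (j+1) + j' = k-1 by omega]
        have a3 : j'*(2*d) = 2*(j'*d) := by ring
        have a4 : (j'+1)*(2*d) = 2*((j'+1)*d) := by ring
        rw [show 1 + j'*(2*d) = 2*n+3-2*(i+(j+1)*d) by omega,
          show 1 + (j'+1)*(2*d) = 2*n+3-2*(i+j*d) by omega]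
        exact (hflip (i+j*d) (i+(j+1)*d) (by omega) (by omega) (by omega)
          (by omega)).mp (hm j (by omega))
    · have hend : i + (l-1)*d = n+1 := by
        by_contra hc
        exact hnodec (restrict_dec n l z π i d hi hd (by omega) hm)
      refine hAM'.2 ⟨1, 2*d, le_refl 1, by omega, ?_, ?_⟩
      · have : (l-1)*(2*d) = 2*((l-1)*d) := by ring
        omega
      · intro j' hj'
        set j := l-2-j' with hjd
        have a1 : j*d + (j'+1)*d = (l-1)*d := by
          rw [← Nat.add_mul, show j + (j'+1) = l-1 by omega]
        have a2 : (j+1)*d + j'*d = (l-1)*d := by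
          rw [← Nat.add_mul, show (j+1) + j' = l-1 by omega]
        have a3 : j'*(2*d) = 2*(j'*d) := by ring
        have a4 : (j'+1)*(2*d) = 2*((j'+1)*d) := by ring
        rw [show 1 + j'*(2*d) = 2*n+3-2*(i+(j+1)*d) by omega,
          show 1 + (j'+1)*(2*d) = 2*n+3-2*(i+j*d) by omega]
        exact (hflip (i+(j+1)*d) (i+j*d) (by omega) (by omega) (by omega)
          (by omega)).mp (hm j (by omega))
end

section
/- For all integers k, ℓ ≥ 3: if there exists a (k,ℓ)-bicrucial permutation of even length n, then there exists a (k,ℓ)-bicrucial permutation of (odd) length 2n+1. -/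
/-- arithmetic run w.r.t. a relation -/
def Run (N c : ℕ) (R : ℕ → ℕ → Prop) (f : ℕ → ℕ) : Prop :=
  ∃ i d : ℕ, 1 ≤ i ∧ 1 ≤ d ∧ i + (c - 1) * d ≤ N ∧
    ∀ j, j + 1 < c → R (f (i + j * d)) (f (i + (j + 1) * d))

lemma hasArithInc_iff_run {n k : ℕ} {f : ℕ → ℕ} :
    HasArithInc n k f ↔ Run n k (· < ·) f := Iff.rfl

lemma hasArithDec_iff_run {n k : ℕ} {f : ℕ → ℕ} :
    HasArithDec n k f ↔ Run n k (· > ·) f := Iff.rfl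

lemma Run.map {N M c : ℕ} {R : ℕ → ℕ → Prop} {f g : ℕ → ℕ} (o : ℕ) (ho : o ≤ 1)
    (h : Run N c R f) (hM : 2 * N - o ≤ M)
    (hfg : ∀ a b, 1 ≤ a → a ≤ N → 1 ≤ b → b ≤ N →
      (R (f a) (f b) ↔ R (g (2 * a - o)) (g (2 * b - o)))) :
    Run M c R g := by
  obtain ⟨i, d, hi, hd, hb, hm⟩ := h
  refine ⟨2 * i - o, 2 * d, by omega, by omega, ?_, ?_⟩
  · have e : (c - 1) * (2 * d) = 2 * ((c - 1) * d) := by ring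
    omega
  · intro j hj
    have hjd : j * (2 * d) = 2 * (j * d) := by ring
    have hjd1 : (j + 1) * (2 * d) = 2 * ((j + 1) * d) := by ring
    have hup : (j + 1) * d ≤ (c - 1) * d := Nat.mul_le_mul_right d (by omega)
    have hup2 : j * d ≤ (c - 1) * d := Nat.mul_le_mul_right d (by omega)
    have e1 : 2 * i - o + j * (2 * d) = 2 * (i + j * d) - o := by omega
    have e2 : 2 * i - o + (j + 1) * (2 * d) = 2 * (i + (j + 1) * d) - o := by omega
    rw [e1, e2]
    exact (hfg _ _ (by omega) (by omega) (by omega) (by omega)).1 (hm j hj)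

def rk (M : ℕ) (f : ℕ → ℕ) (a : ℕ) : ℕ :=
  ((Finset.Icc 1 M).filter (fun t => f t ≤ f a)).card

lemma rk_pos {M : ℕ} {f : ℕ → ℕ} {a : ℕ} (h1 : 1 ≤ a) (h2 : a ≤ M) :
    1 ≤ rk M f a := by
  have : a ∈ (Finset.Icc 1 M).filter (fun t => f t ≤ f a) := by
    simp [Finset.mem_Icc, h1, h2]
  exact Finset.card_pos.2 ⟨a, this⟩

lemma rk_le {M : ℕ} {f : ℕ → ℕ} (a : ℕ) : rk M f a ≤ M := by
  have := Finset.card_filter_le (Finset.Icc 1 M) (fun t => f t ≤ f a)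
  simpa [rk] using this

lemma rk_lt_of_lt {M : ℕ} {f : ℕ → ℕ} {a b : ℕ} (hb1 : 1 ≤ b) (hb2 : b ≤ M)
    (h : f a < f b) : rk M f a < rk M f b := by
  apply Finset.card_lt_card
  rw [Finset.ssubset_iff_of_subset]
  · refine ⟨b, by simp [Finset.mem_Icc, hb1, hb2], by simp; omega⟩
  · intro t ht
    simp only [Finset.mem_filter] at ht ⊢
    exact ⟨ht.1, by omega⟩

lemma rk_lt_iff {M : ℕ} {f : ℕ → ℕ}
    (hinj : ∀ a b, 1 ≤ a → a ≤ M → 1 ≤ b → b ≤ M → f a = f b → a = b)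
    {a b : ℕ} (ha1 : 1 ≤ a) (ha2 : a ≤ M) (hb1 : 1 ≤ b) (hb2 : b ≤ M) :
    f a < f b ↔ rk M f a < rk M f b := by
  constructor
  · exact rk_lt_of_lt hb1 hb2
  · intro h
    rcases lt_trichotomy (f a) (f b) with h' | h' | h'
    · exact h'
    · exfalso
      have : rk M f a = rk M f b := by unfold rk; rw [h']
      omega
    · exact absurd (rk_lt_of_lt ha1 ha2 h') (by omega)
lemma rk_val_eq {M : ℕ} {f : ℕ → ℕ} {a b : ℕ} (ha1 : 1 ≤ a) (ha2 : a ≤ M)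
    (hb1 : 1 ≤ b) (hb2 : b ≤ M) (h : rk M f a = rk M f b) : f a = f b := by
  rcases lt_trichotomy (f a) (f b) with h' | h' | h'
  · exact absurd (rk_lt_of_lt hb1 hb2 h') (by omega)
  · exact h'
  · exact absurd (rk_lt_of_lt ha1 ha2 h') (by omega)

lemma rk_surj {M : ℕ} {f : ℕ → ℕ}
    (hinj : ∀ a b, 1 ≤ a → a ≤ M → 1 ≤ b → b ≤ M → f a = f b → a = b)
    {v : ℕ} (hv1 : 1 ≤ v) (hv2 : v ≤ M) :
    ∃ a, 1 ≤ a ∧ a ≤ M ∧ rk M f a = v := by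
  have := Finset.surj_on_of_inj_on_of_card_le
    (s := Finset.Icc 1 M) (t := Finset.Icc 1 M)
    (fun a _ => rk M f a)
    (fun a ha => by
      simp only [Finset.mem_Icc] at ha ⊢
      exact ⟨rk_pos ha.1 ha.2, rk_le a⟩)
    (fun a b ha hb h => by
      simp only [Finset.mem_Icc] at ha hb
      exact hinj a b ha.1 ha.2 hb.1 hb.2 (rk_val_eq ha.1 ha.2 hb.1 hb.2 h))
    le_rfl v (by simp [Finset.mem_Icc]; omega)
  obtain ⟨a, ha, hav⟩ := this
  simp only [Finset.mem_Icc] at ha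
  exact ⟨a, ha.1, ha.2, hav.symm⟩
/-- The doubled permutation of length `4*m+1` built from `π` of length `2*m`. -/
def Sig (m : ℕ) (π : ℕ → ℕ) : ℕ → ℕ :=
  fun p =>
    if p % 2 = 0 then π (p / 2)
    else if p % 4 = 1 then 3 * m + rk (m + 1) π ((p + 3) / 4)
    else 2 * m + rk m π ((p + 1) / 4)

lemma Sig_even (m : ℕ) (π : ℕ → ℕ) (j : ℕ) : Sig m π (2 * j) = π j := by
  unfold Sig
  rw [if_pos (by omega)]
  congr 1
  omega

lemma Sig_C (m : ℕ) (π : ℕ → ℕ) (t : ℕ) :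
    Sig m π (4 * t + 1) = 3 * m + rk (m + 1) π (t + 1) := by
  unfold Sig
  rw [if_neg (by omega), if_pos (by omega)]
  congr 2
  omega

lemma Sig_B (m : ℕ) (π : ℕ → ℕ) (t : ℕ) :
    Sig m π (4 * t + 3) = 2 * m + rk m π (t + 1) := by
  unfold Sig
  rw [if_neg (by omega), if_neg (by omega)]
  congr 2
  omega

lemma Sig_bandA {m : ℕ} {π : ℕ → ℕ}
    (hbd : ∀ i, 1 ≤ i → i ≤ 2 * m → 1 ≤ π i ∧ π i ≤ 2 * m)
    {p : ℕ} (h2 : p % 2 = 0) (h1 : 1 ≤ p) (hp : p ≤ 4 * m + 1) :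
    1 ≤ Sig m π p ∧ Sig m π p ≤ 2 * m := by
  have e : p = 2 * (p / 2) := by omega
  rw [e, Sig_even]
  exact hbd _ (by omega) (by omega)

lemma Sig_bandC {m : ℕ} {π : ℕ → ℕ} {p : ℕ} (h4 : p % 4 = 1) (hp : p ≤ 4 * m + 1) :
    3 * m + 1 ≤ Sig m π p ∧ Sig m π p ≤ 4 * m + 1 := by
  have e : p = 4 * (p / 4) + 1 := by omega
  rw [e, Sig_C]
  have h1 := rk_pos (M := m + 1) (f := π) (a := p / 4 + 1) (by omega) (by omega)
  have h2 := rk_le (M := m + 1) (f := π) (p / 4 + 1)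
  omega

lemma Sig_bandB {m : ℕ} {π : ℕ → ℕ} (hm : 1 ≤ m) {p : ℕ}
    (h4 : p % 4 = 3) (hp : p ≤ 4 * m + 1) :
    2 * m + 1 ≤ Sig m π p ∧ Sig m π p ≤ 3 * m := by
  have e : p = 4 * (p / 4) + 3 := by omega
  rw [e, Sig_B]
  have h1 := rk_pos (M := m) (f := π) (a := p / 4 + 1) (by omega) (by omega)
  have h2 := rk_le (M := m) (f := π) (p / 4 + 1)
  omega

lemma Sig_bandOdd {m : ℕ} {π : ℕ → ℕ} (hm : 1 ≤ m) {p : ℕ}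
    (h2 : p % 2 = 1) (hp : p ≤ 4 * m + 1) :
    2 * m + 1 ≤ Sig m π p ∧ Sig m π p ≤ 4 * m + 1 := by
  have : p % 4 = 1 ∨ p % 4 = 3 := by omega
  rcases this with h | h
  · have := Sig_bandC (m := m) (π := π) h hp
    omega
  · have := Sig_bandB (m := m) (π := π) hm h hp
    omega

lemma Sig_noRun {m c : ℕ} {π : ℕ → ℕ} {R : ℕ → ℕ → Prop} (hc : 3 ≤ c) (hm : 1 ≤ m)
    (hbd : ∀ i, 1 ≤ i → i ≤ 2 * m → 1 ≤ π i ∧ π i ≤ 2 * m)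
    (hπR : ¬ Run (2 * m) c R π)
    (hk1 : ∀ x y z t : ℕ, x ≤ t → t < y → z ≤ t → ¬ (R x y ∧ R y z))
    (hk2 : ∀ x y z t : ℕ, t < x → y ≤ t → t < z → ¬ (R x y ∧ R y z))
    (hsh : ∀ w u v : ℕ, R (w + u) (w + v) → R u v)
    (hr1 : ∀ a b, 1 ≤ a → a ≤ m + 1 → 1 ≤ b → b ≤ m + 1 →
      R (rk (m + 1) π a) (rk (m + 1) π b) → R (π a) (π b))
    (hr2 : ∀ a b, 1 ≤ a → a ≤ m → 1 ≤ b → b ≤ m →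
      R (rk m π a) (rk m π b) → R (π a) (π b)) :
    ¬ Run (4 * m + 1) c R (Sig m π) := by
  rintro ⟨i, d, hi, hd, hb, hmono⟩
  have h2d : 2 * d ≤ (c - 1) * d := Nat.mul_le_mul_right d (by omega)
  have hi2 : i + 2 * d ≤ 4 * m + 1 := by omega
  have hm0 := hmono 0 (by omega)
  rw [show i + 0 * d = i by omega, show i + (0 + 1) * d = i + d by omega] at hm0
  have hm1 := hmono 1 (by omega)
  rw [show i + 1 * d = i + d by omega, show i + (1 + 1) * d = i + 2 * d by omega] at hm1
  rcases Nat.even_or_odd d with hdeven | hdodd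
  · -- d even
    rcases Nat.even_or_odd i with hieven | hiodd
    · -- both even : pattern inside π
      obtain ⟨d', rfl⟩ : ∃ d', d = 2 * d' := by
        obtain ⟨d', hd'⟩ := hdeven; exact ⟨d', by omega⟩
      obtain ⟨i', rfl⟩ : ∃ i', i = 2 * i' := by
        obtain ⟨i', hi'⟩ := hieven; exact ⟨i', by omega⟩
      refine hπR ⟨i', d', by omega, by omega, ?_, ?_⟩
      · have e : (c - 1) * (2 * d') = 2 * ((c - 1) * d') := by ring
        omega
      · intro j hj
        have := hmono j hj
        rw [show 2 * i' + j * (2 * d') = 2 * (i' + j * d') by ring,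
            show 2 * i' + (j + 1) * (2 * d') = 2 * (i' + (j + 1) * d') by ring,
            Sig_even, Sig_even] at this
        exact this
    · -- i odd, d even
      have hi1 : i % 2 = 1 := Nat.odd_iff.mp hiodd
      have hd0 : d % 2 = 0 := Nat.even_iff.mp hdeven
      have : d % 4 = 2 ∨ d % 4 = 0 := by omega
      rcases this with hd4 | hd4
      · -- alternates between bands C and B
        have : i % 4 = 1 ∨ i % 4 = 3 := by omega
        rcases this with hi4 | hi4
        · -- C B C : high low high
          have hC1 := Sig_bandC (m := m) (π := π) hi4 (by omega)
          have hB := Sig_bandB (m := m) (π := π) hm (p := i + d) (by omega) (by omega)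
          have hC2 := Sig_bandC (m := m) (π := π) (p := i + 2 * d) (by omega) (by omega)
          exact hk2 _ _ _ (3 * m) (by omega) (by omega) (by omega) ⟨hm0, hm1⟩
        · -- B C B : low high low
          have hB1 := Sig_bandB (m := m) (π := π) hm hi4 (by omega)
          have hC := Sig_bandC (m := m) (π := π) (p := i + d) (by omega) (by omega)
          have hB2 := Sig_bandB (m := m) (π := π) hm (p := i + 2 * d) (by omega) (by omega)
          exact hk1 _ _ _ (3 * m) (by omega) (by omega) (by omega) ⟨hm0, hm1⟩
      · -- d ≡ 0 (mod 4) : stays within band C or band B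
        obtain ⟨e, rfl⟩ : ∃ e, d = 4 * e := ⟨d / 4, by omega⟩
        have he1 : 1 ≤ e := by omega
        have hcd : (c - 1) * (4 * e) = 4 * ((c - 1) * e) := by ring
        have : i % 4 = 1 ∨ i % 4 = 3 := by omega
        rcases this with hi4 | hi4
        · obtain ⟨t, rfl⟩ : ∃ t, i = 4 * t + 1 := ⟨i / 4, by omega⟩
          refine hπR ⟨t + 1, e, by omega, by omega, by omega, ?_⟩
          intro j hj
          have hj1 : (j + 1) * e ≤ (c - 1) * e := Nat.mul_le_mul_right e (by omega)
          have hj0 : j * e ≤ (c - 1) * e := Nat.mul_le_mul_right e (by omega)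
          have hstep := hmono j hj
          rw [show 4 * t + 1 + j * (4 * e) = 4 * (t + j * e) + 1 by ring,
              show 4 * t + 1 + (j + 1) * (4 * e) = 4 * (t + (j + 1) * e) + 1 by ring,
              Sig_C, Sig_C] at hstep
          have h' := hsh _ _ _ hstep
          have h'' := hr1 _ _ (by omega) (by omega) (by omega) (by omega) h'
          rw [show t + 1 + j * e = t + j * e + 1 by omega,
              show t + 1 + (j + 1) * e = t + (j + 1) * e + 1 by omega]
          exact h''
        · obtain ⟨t, rfl⟩ : ∃ t, i = 4 * t + 3 := ⟨i / 4, by omega⟩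
          refine hπR ⟨t + 1, e, by omega, by omega, by omega, ?_⟩
          intro j hj
          have hj1 : (j + 1) * e ≤ (c - 1) * e := Nat.mul_le_mul_right e (by omega)
          have hj0 : j * e ≤ (c - 1) * e := Nat.mul_le_mul_right e (by omega)
          have hstep := hmono j hj
          rw [show 4 * t + 3 + j * (4 * e) = 4 * (t + j * e) + 3 by ring,
              show 4 * t + 3 + (j + 1) * (4 * e) = 4 * (t + (j + 1) * e) + 3 by ring,
              Sig_B, Sig_B] at hstep
          have h' := hsh _ _ _ hstep
          have h'' := hr2 _ _ (by omega) (by omega) (by omega) (by omega) h'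
          rw [show t + 1 + j * e = t + j * e + 1 by omega,
              show t + 1 + (j + 1) * e = t + (j + 1) * e + 1 by omega]
          exact h''
  · -- d odd : parity alternates
    have hd1 : d % 2 = 1 := Nat.odd_iff.mp hdodd
    rcases Nat.even_or_odd i with hieven | hiodd
    · have hi0 : i % 2 = 0 := Nat.even_iff.mp hieven
      have hA1 := Sig_bandA hbd (p := i) (by omega) (by omega) (by omega)
      have hO := Sig_bandOdd (m := m) (π := π) hm (p := i + d) (by omega) (by omega)
      have hA2 := Sig_bandA hbd (p := i + 2 * d) (by omega) (by omega) (by omega)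
      exact hk1 _ _ _ (2 * m) (by omega) (by omega) (by omega) ⟨hm0, hm1⟩
    · have hi1 : i % 2 = 1 := Nat.odd_iff.mp hiodd
      have hO1 := Sig_bandOdd (m := m) (π := π) hm (p := i) (by omega) (by omega)
      have hA := Sig_bandA hbd (p := i + d) (by omega) (by omega) (by omega)
      have hO2 := Sig_bandOdd (m := m) (π := π) hm (p := i + 2 * d) (by omega) (by omega)
      exact hk2 _ _ _ (2 * m) (by omega) (by omega) (by omega) ⟨hm0, hm1⟩
lemma Sig_perm {m : ℕ} {π : ℕ → ℕ} (hm : 1 ≤ m)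
    (hperm : IsPermutation (2 * m) π) :
    IsPermutation (4 * m + 1) (Sig m π) := by
  obtain ⟨hbd, hinj, hsurj⟩ := hperm
  have hinj1 : ∀ a b, 1 ≤ a → a ≤ m + 1 → 1 ≤ b → b ≤ m + 1 → π a = π b → a = b :=
    fun a b ha1 ha2 hb1 hb2 h => hinj a b ha1 (by omega) hb1 (by omega) h
  have hinj2 : ∀ a b, 1 ≤ a → a ≤ m → 1 ≤ b → b ≤ m → π a = π b → a = b :=
    fun a b ha1 ha2 hb1 hb2 h => hinj a b ha1 (by omega) hb1 (by omega) h
  refine ⟨?_, ?_, ?_⟩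
  · -- bounds
    intro p h1 h2
    have : p % 2 = 0 ∨ p % 4 = 1 ∨ p % 4 = 3 := by omega
    rcases this with h | h | h
    · have := Sig_bandA hbd h h1 h2; omega
    · have := Sig_bandC (m := m) (π := π) h h2; omega
    · have := Sig_bandB (m := m) (π := π) hm h h2; omega
  · -- injective
    intro p q hp1 hp2 hq1 hq2 heq
    have hp : p % 2 = 0 ∨ p % 4 = 1 ∨ p % 4 = 3 := by omega
    have hq : q % 2 = 0 ∨ q % 4 = 1 ∨ q % 4 = 3 := by omega
    have bApq := Sig_bandA hbd (p := p)
    rcases hp with hp | hp | hp <;> rcases hq with hq | hq | hq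
    · -- even, even
      have ep : p = 2 * (p / 2) := by omega
      have eq' : q = 2 * (q / 2) := by omega
      rw [ep, Sig_even, eq', Sig_even] at heq
      have := hinj _ _ (by omega) (by omega) (by omega) (by omega) heq
      omega
    · have b1 := Sig_bandA hbd hp hp1 hp2
      have b2 := Sig_bandC (m := m) (π := π) hq hq2; omega
    · have b1 := Sig_bandA hbd hp hp1 hp2
      have b2 := Sig_bandB (m := m) (π := π) hm hq hq2; omega
    · have b1 := Sig_bandC (m := m) (π := π) hp hp2
      have b2 := Sig_bandA hbd hq hq1 hq2; omega
    · -- C, C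
      have ep : p = 4 * (p / 4) + 1 := by omega
      have eq' : q = 4 * (q / 4) + 1 := by omega
      rw [ep, Sig_C, eq', Sig_C] at heq
      have hr : rk (m + 1) π (p / 4 + 1) = rk (m + 1) π (q / 4 + 1) := by omega
      have hv := rk_val_eq (by omega : 1 ≤ p / 4 + 1) (by omega : p / 4 + 1 ≤ m + 1)
        (by omega : 1 ≤ q / 4 + 1) (by omega : q / 4 + 1 ≤ m + 1) hr
      have := hinj1 _ _ (by omega) (by omega) (by omega) (by omega) hv
      omega
    · have b1 := Sig_bandC (m := m) (π := π) hp hp2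
      have b2 := Sig_bandB (m := m) (π := π) hm hq hq2; omega
    · have b1 := Sig_bandB (m := m) (π := π) hm hp hp2
      have b2 := Sig_bandA hbd hq hq1 hq2; omega
    · have b1 := Sig_bandB (m := m) (π := π) hm hp hp2
      have b2 := Sig_bandC (m := m) (π := π) hq hq2; omega
    · -- B, B
      have ep : p = 4 * (p / 4) + 3 := by omega
      have eq' : q = 4 * (q / 4) + 3 := by omega
      rw [ep, Sig_B, eq', Sig_B] at heq
      have hr : rk m π (p / 4 + 1) = rk m π (q / 4 + 1) := by omega
      have hv := rk_val_eq (by omega : 1 ≤ p / 4 + 1) (by omega : p / 4 + 1 ≤ m)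
        (by omega : 1 ≤ q / 4 + 1) (by omega : q / 4 + 1 ≤ m) hr
      have := hinj2 _ _ (by omega) (by omega) (by omega) (by omega) hv
      omega
  · -- surjective
    intro v h1 h2
    have : v ≤ 2 * m ∨ (2 * m + 1 ≤ v ∧ v ≤ 3 * m) ∨ 3 * m + 1 ≤ v := by omega
    rcases this with h | h | h
    · obtain ⟨i, hi1, hi2, hiv⟩ := hsurj v h1 h
      exact ⟨2 * i, by omega, by omega, by rw [Sig_even]; exact hiv⟩
    · obtain ⟨a, ha1, ha2, hav⟩ := rk_surj (M := m) hinj2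
        (v := v - 2 * m) (by omega) (by omega)
      refine ⟨4 * (a - 1) + 3, by omega, by omega, ?_⟩
      rw [Sig_B, show a - 1 + 1 = a by omega, hav]
      omega
    · obtain ⟨a, ha1, ha2, hav⟩ := rk_surj (M := m + 1) hinj1
        (v := v - 3 * m) (by omega) (by omega)
      refine ⟨4 * (a - 1) + 1, by omega, by omega, ?_⟩
      rw [Sig_C, show a - 1 + 1 = a by omega, hav]
      omega
lemma Sig_right {m k l : ℕ} {π : ℕ → ℕ} (hm : 1 ≤ m)
    (hπ : Bicrucial (2 * m) k l π) :
    ∀ x, 1 ≤ x → x ≤ 4 * m + 1 + 1 →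
      ¬ AntiMonotone (4 * m + 1 + 1) k l (ExtendRight (4 * m + 1) (Sig m π) x) := by
  intro x hx1 hx2 hAM
  set x' := min x (2 * m + 1) with hx'def
  have hx'1 : 1 ≤ x' := by omega
  have hx'2 : x' ≤ 2 * m + 1 := by omega
  have hbd := hπ.1.1.1
  have hcr := hπ.1.2.2 x' hx'1 hx'2
  rw [AntiMonotone, not_and_or, not_not, not_not] at hcr
  have hFval : ∀ a, 1 ≤ a → a ≤ 2 * m + 1 →
      ExtendRight (4 * m + 1) (Sig m π) x (2 * a) =
        if a = 2 * m + 1 then x else (if x ≤ π a then π a + 1 else π a) := by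
    intro a h1 h2
    unfold ExtendRight
    by_cases hae : a = 2 * m + 1
    · rw [if_pos (by omega), if_pos hae]
    · rw [if_neg (by omega), if_neg hae, Sig_even]
  have hEval : ∀ a, 1 ≤ a → a ≤ 2 * m + 1 →
      ExtendRight (2 * m) π x' a =
        if a = 2 * m + 1 then x' else (if x' ≤ π a then π a + 1 else π a) := by
    intro a h1 h2
    rfl
  have key : ∀ a b, 1 ≤ a → a ≤ 2 * m + 1 → 1 ≤ b → b ≤ 2 * m + 1 →
      (ExtendRight (2 * m) π x' a < ExtendRight (2 * m) π x' b ↔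
        ExtendRight (4 * m + 1) (Sig m π) x (2 * a) <
          ExtendRight (4 * m + 1) (Sig m π) x (2 * b)) := by
    intro a b ha1 ha2 hb1 hb2
    rw [hFval a ha1 ha2, hFval b hb1 hb2, hEval a ha1 ha2, hEval b hb1 hb2]
    by_cases hx : x ≤ 2 * m + 1
    · rw [show x' = x by omega]
    · rw [show x' = 2 * m + 1 by omega]
      by_cases hA : a = 2 * m + 1 <;> by_cases hB : b = 2 * m + 1
      · simp [hA, hB]
      · have hπb := hbd b hb1 (by omega)
        rw [if_pos hA, if_pos hA, if_neg hB, if_neg hB,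
            if_neg (by omega : ¬ x ≤ π b), if_neg (by omega : ¬ 2 * m + 1 ≤ π b)]
        constructor <;> (intro; omega)
      · have hπa := hbd a ha1 (by omega)
        rw [if_neg hA, if_neg hA, if_pos hB, if_pos hB,
            if_neg (by omega : ¬ x ≤ π a), if_neg (by omega : ¬ 2 * m + 1 ≤ π a)]
        constructor <;> (intro; omega)
      · have hπa := hbd a ha1 (by omega)
        have hπb := hbd b hb1 (by omega)
        rw [if_neg hA, if_neg hA, if_neg hB, if_neg hB,
            if_neg (by omega : ¬ x ≤ π a), if_neg (by omega : ¬ 2 * m + 1 ≤ π a),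
            if_neg (by omega : ¬ x ≤ π b), if_neg (by omega : ¬ 2 * m + 1 ≤ π b)]
  rcases hcr with hI | hD
  · exact hAM.1 (Run.map (R := (· < ·)) 0 (by omega) hI (by omega)
      (fun a b ha1 ha2 hb1 hb2 => by
        simpa using key a b ha1 ha2 hb1 hb2))
  · exact hAM.2 (Run.map (R := (· > ·)) 0 (by omega) hD (by omega)
      (fun a b ha1 ha2 hb1 hb2 => by
        simpa using key b a hb1 hb2 ha1 ha2))

lemma Sig_left {m k l : ℕ} {π : ℕ → ℕ} (hm : 1 ≤ m)
    (hπ : Bicrucial (2 * m) k l π) :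
    ∀ x, 1 ≤ x → x ≤ 4 * m + 1 + 1 →
      ¬ AntiMonotone (4 * m + 1 + 1) k l (ExtendLeft (Sig m π) x) := by
  intro x hx1 hx2 hAM
  set x' := min x (2 * m + 1) with hx'def
  have hx'1 : 1 ≤ x' := by omega
  have hx'2 : x' ≤ 2 * m + 1 := by omega
  have hbd := hπ.1.1.1
  have hcr := hπ.2 x' hx'1 hx'2
  rw [AntiMonotone, not_and_or, not_not, not_not] at hcr
  have hGval : ∀ a, 1 ≤ a → a ≤ 2 * m + 1 →
      ExtendLeft (Sig m π) x (2 * a - 1) =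
        if a = 1 then x else (if x ≤ π (a - 1) then π (a - 1) + 1 else π (a - 1)) := by
    intro a h1 h2
    unfold ExtendLeft
    by_cases hae : a = 1
    · rw [if_pos (by omega), if_pos hae]
    · rw [if_neg (by omega), if_neg hae, show 2 * a - 1 - 1 = 2 * (a - 1) by omega,
        Sig_even]
  have hEval : ∀ a, 1 ≤ a → a ≤ 2 * m + 1 →
      ExtendLeft π x' a =
        if a = 1 then x' else (if x' ≤ π (a - 1) then π (a - 1) + 1 else π (a - 1)) := by
    intro a h1 h2
    rfl
  have key : ∀ a b, 1 ≤ a → a ≤ 2 * m + 1 → 1 ≤ b → b ≤ 2 * m + 1 →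
      (ExtendLeft π x' a < ExtendLeft π x' b ↔
        ExtendLeft (Sig m π) x (2 * a - 1) < ExtendLeft (Sig m π) x (2 * b - 1)) := by
    intro a b ha1 ha2 hb1 hb2
    rw [hGval a ha1 ha2, hGval b hb1 hb2, hEval a ha1 ha2, hEval b hb1 hb2]
    by_cases hx : x ≤ 2 * m + 1
    · rw [show x' = x by omega]
    · rw [show x' = 2 * m + 1 by omega]
      by_cases hA : a = 1 <;> by_cases hB : b = 1
      · simp [hA, hB]
      · have hπb := hbd (b - 1) (by omega) (by omega)
        rw [if_pos hA, if_pos hA, if_neg hB, if_neg hB,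
            if_neg (by omega : ¬ x ≤ π (b - 1)), if_neg (by omega : ¬ 2 * m + 1 ≤ π (b - 1))]
        constructor <;> (intro; omega)
      · have hπa := hbd (a - 1) (by omega) (by omega)
        rw [if_neg hA, if_neg hA, if_pos hB, if_pos hB,
            if_neg (by omega : ¬ x ≤ π (a - 1)), if_neg (by omega : ¬ 2 * m + 1 ≤ π (a - 1))]
        constructor <;> (intro; omega)
      · have hπa := hbd (a - 1) (by omega) (by omega)
        have hπb := hbd (b - 1) (by omega) (by omega)
        rw [if_neg hA, if_neg hA, if_neg hB, if_neg hB,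
            if_neg (by omega : ¬ x ≤ π (a - 1)), if_neg (by omega : ¬ 2 * m + 1 ≤ π (a - 1)),
            if_neg (by omega : ¬ x ≤ π (b - 1)), if_neg (by omega : ¬ 2 * m + 1 ≤ π (b - 1))]
  rcases hcr with hI | hD
  · exact hAM.1 (Run.map (R := (· < ·)) 1 (by omega) hI (by omega)
      (fun a b ha1 ha2 hb1 hb2 => key a b ha1 ha2 hb1 hb2))
  · exact hAM.2 (Run.map (R := (· > ·)) 1 (by omega) hD (by omega)
      (fun a b ha1 ha2 hb1 hb2 => key b a hb1 hb2 ha1 ha2))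
/-- If a `(k,l)`-bicrucial permutation of even length `n` exists, then a
`(k,l)`-bicrucial permutation of (odd) length `2*n+1` exists. -/
theorem bicrucial_odd_from_even (k l n : ℕ) (hk : 3 ≤ k) (hl : 3 ≤ l)
    (hn : Even n) (h : ∃ π : ℕ → ℕ, Bicrucial n k l π) :
    ∃ σ : ℕ → ℕ, Bicrucial (2 * n + 1) k l σ := by
  obtain ⟨π, hπ⟩ := h
  obtain ⟨m, hm'⟩ := hn
  have hn2 : n = 2 * m := by omega
  subst hn2
  have hm : 1 ≤ m := by
    by_contra hm0
    have hmz : m = 0 := by omega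
    subst hmz
    apply hπ.1.2.2 1 le_rfl (by omega)
    constructor
    · rintro ⟨i, d, hi, hd, hb, -⟩
      have : 2 * 1 ≤ (k - 1) * d := Nat.mul_le_mul (by omega) hd
      omega
    · rintro ⟨i, d, hi, hd, hb, -⟩
      have : 2 * 1 ≤ (l - 1) * d := Nat.mul_le_mul (by omega) hd
      omega
  have hbd := hπ.1.1.1
  have hinj := hπ.1.1.2.1
  have hinj1 : ∀ a b, 1 ≤ a → a ≤ m + 1 → 1 ≤ b → b ≤ m + 1 → π a = π b → a = b :=
    fun a b ha1 ha2 hb1 hb2 hab => hinj a b ha1 (by omega) hb1 (by omega) hab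
  have hinj2 : ∀ a b, 1 ≤ a → a ≤ m → 1 ≤ b → b ≤ m → π a = π b → a = b :=
    fun a b ha1 ha2 hb1 hb2 hab => hinj a b ha1 (by omega) hb1 (by omega) hab
  have hanti := hπ.1.2.1
  have ninc : ¬ HasArithInc (4 * m + 1) k (Sig m π) := by
    refine Sig_noRun (R := (· < ·)) hk hm hbd hanti.1 ?_ ?_ ?_ ?_ ?_
    · intro x y z t h1 h2 h3 hc; omega
    · intro x y z t h1 h2 h3 hc; omega
    · intro w u v hw; omega
    · intro a b ha1 ha2 hb1 hb2 hr
      exact (rk_lt_iff hinj1 ha1 ha2 hb1 hb2).mpr hr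
    · intro a b ha1 ha2 hb1 hb2 hr
      exact (rk_lt_iff hinj2 ha1 ha2 hb1 hb2).mpr hr
  have ndec : ¬ HasArithDec (4 * m + 1) l (Sig m π) := by
    refine Sig_noRun (R := (· > ·)) hl hm hbd hanti.2 ?_ ?_ ?_ ?_ ?_
    · intro x y z t h1 h2 h3 hc
      exact absurd hc.1 (by omega)
    · intro x y z t h1 h2 h3 hc
      exact absurd hc.2 (by omega)
    · intro w u v hw
      simpa using (by omega : v < u)
    · intro a b ha1 ha2 hb1 hb2 hr
      exact (rk_lt_iff hinj1 hb1 hb2 ha1 ha2).mpr hr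
    · intro a b ha1 ha2 hb1 hb2 hr
      exact (rk_lt_iff hinj2 hb1 hb2 ha1 ha2).mpr hr
  refine ⟨Sig m π, ?_⟩
  rw [show 2 * (2 * m) + 1 = 4 * m + 1 by ring]
  exact ⟨⟨Sig_perm hm hπ.1.1, ⟨ninc, ndec⟩, Sig_right hm hπ⟩, Sig_left hm hπ⟩
end
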